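/- arXiv:2103.07696 — 3 statements merged into one kernel-verified Lean document; each statement's English description precedes it below -/
import Mathlib

section
/- Let G₁ and G₂ be finite trees such that G₁ is a subgraph of G₂, i.e. there exists an injective graph homomorphism from G₁ to G₂. Then λ₂(G₂) ≤ λ₂(G₁), where λ₂ denotes the first nonzero Steklov eigenvalue. -/
open Finset

attribute [local instance] Classical.propDecidable

namespace Steklov

variable {V : Type} [Fintype V] [DecidableEq V]

/-- The boundary of a graph: the set of vertices of degree one. -/
noncomputable def bdry (G : SimpleGraph V) : Finset V :=
  Finset.univ.filter (fun v => G.degree v = 1)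

/-- The graph Laplacian `Δf(x) = Σ_{y∼x} (f x - f y)`. -/
noncomputable def lap (G : SimpleGraph V) (f : V → ℝ) (x : V) : ℝ :=
  ∑ y ∈ G.neighborFinset x, (f x - f y)

/-- `f` is a Steklov eigenfunction of `G` with eigenvalue `lam`:
`f ≠ 0`, `Δf = 0` on the interior and `∂f/∂n = lam • f` on the boundary. -/
noncomputable def IsEigenpair (G : SimpleGraph V) (lam : ℝ) (f : V → ℝ) : Prop :=
  f ≠ 0 ∧ (∀ x, x ∉ bdry G → lap G f x = 0) ∧ ∀ x ∈ bdry G, lap G f x = lam * f x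

/-- The first nonzero Steklov eigenvalue of `G`. -/
noncomputable def lambda2 (G : SimpleGraph V) : ℝ :=
  sInf {lam : ℝ | 0 < lam ∧ ∃ f : V → ℝ, IsEigenpair G lam f}

/-- `f` is a `lam`-flow to `x` on `G`. -/
noncomputable def IsFlow (G : SimpleGraph V) (lam : ℝ) (x : V) (f : V → ℝ) : Prop :=
  f ≠ 0 ∧ (∀ w, w ∉ bdry G → w ≠ x → lap G f w = 0) ∧
    ∀ w ∈ bdry G, w ≠ x → lap G f w = lam * f w

/-- The Rayleigh quotient of `f` (sum over undirected edges in the numerator). -/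
noncomputable def rayleigh (G : SimpleGraph V) (f : V → ℝ) : ℝ :=
  ((∑ x, ∑ y ∈ G.neighborFinset x, (f x - f y) ^ 2) / 2) / ∑ x ∈ bdry G, f x ^ 2

/-- `Σ(G,x)`: the set of `lam ≥ 0` admitting a `lam`-flow `f` to `x` with `f x = 0`
which increases along edges pointing away from `x`. -/
def SigmaSet (G : SimpleGraph V) (x : V) : Set ℝ :=
  {lam | 0 ≤ lam ∧ ∃ f : V → ℝ, IsFlow G lam x f ∧ f x = 0 ∧
    ∀ y z : V, G.Adj y z → G.dist x z < G.dist x y → f z < f y}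

/-- `Σ̂(G,x)`: the set of `lam ≥ 0` admitting a `lam`-flow `f` to `x` with `f x = 0`. -/
def SigmaHatSet (G : SimpleGraph V) (x : V) : Set ℝ :=
  {lam | 0 ≤ lam ∧ ∃ f : V → ℝ, IsFlow G lam x f ∧ f x = 0}

/-- `σ(G,x) = inf Σ(G,x)`. -/
noncomputable def sigma (G : SimpleGraph V) (x : V) : ℝ := sInf (SigmaSet G x)

/-- `σ̂(G,x) = inf Σ̂(G,x)`. -/
noncomputable def sigmaHat (G : SimpleGraph V) (x : V) : ℝ := sInf (SigmaHatSet G x)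

/-- The vertex set of the branch from `(u,v)`: the connected component of `u`
after deleting the edge between `u` and `v`. -/
def branchSet (G : SimpleGraph V) (u v : V) : Set V :=
  {w | (G.deleteEdges {s(u, v)}).Reachable u w}

/-- The vertex set of the subtree `H(u,v)` spanned by the branch from `(u,v)` together
with `v`. -/
def branchClosed (G : SimpleGraph V) (u v : V) : Set V :=
  insert v (branchSet G u v)

/-- `σ(H(u,v), v)`, computed intrinsically in the subtree `H(u,v)`. -/
noncomputable def sigmaB (G : SimpleGraph V) (u v : V) : ℝ :=
  sigma (G.induce (branchClosed G u v)) ⟨v, Set.mem_insert _ _⟩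

/-- The double `(G)²_x` of `G` at `x`: two disjoint copies of `G` with the two
copies of `x` identified. -/
def doubleAt (G : SimpleGraph V) (x : V) : SimpleGraph (V ⊕ {v : V // v ≠ x}) where
  Adj a b :=
    match a, b with
    | Sum.inl u, Sum.inl w => G.Adj u w
    | Sum.inr u, Sum.inr w => G.Adj u.1 w.1
    | Sum.inl u, Sum.inr w => u = x ∧ G.Adj x w.1
    | Sum.inr u, Sum.inl w => w = x ∧ G.Adj x u.1
  symm := by
    constructor
    rintro (u | u) (w | w) h
    · exact h.symm
    · exact h
    · exact h
    · exact h.symm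
  loopless := by
    constructor
    rintro (u | u) h
    · exact G.loopless.irrefl u h
    · exact G.loopless.irrefl u.1 h

set_option linter.unusedSectionVars false

lemma swap_sum (G : SimpleGraph V) (F : V → V → ℝ) :
    ∑ x, ∑ y ∈ G.neighborFinset x, F x y = ∑ x, ∑ y ∈ G.neighborFinset x, F y x := by
  have h : ∀ (F : V → V → ℝ), ∑ x, ∑ y ∈ G.neighborFinset x, F x y
      = ∑ x : V, ∑ y : V, if G.Adj x y then F x y else 0 := by
    intro F
    refine Finset.sum_congr rfl fun x _ => ?_
    rw [SimpleGraph.neighborFinset_eq_filter, Finset.sum_filter]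
  rw [h, h, Finset.sum_comm]
  refine Finset.sum_congr rfl fun x _ => Finset.sum_congr rfl fun y _ => ?_
  simp [SimpleGraph.adj_comm]

/-- The Dirichlet energy (each edge counted twice). -/
noncomputable def en (G : SimpleGraph V) (f : V → ℝ) : ℝ :=
  ∑ x, ∑ y ∈ G.neighborFinset x, (f x - f y) ^ 2

lemma en_nonneg (G : SimpleGraph V) (f : V → ℝ) : 0 ≤ en G f :=
  Finset.sum_nonneg fun _ _ => Finset.sum_nonneg fun _ _ => sq_nonneg _

/-- Green's identity. -/
lemma green (G : SimpleGraph V) (f g : V → ℝ) :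
    2 * ∑ x, g x * lap G f x = ∑ x, ∑ y ∈ G.neighborFinset x, (g x - g y) * (f x - f y) := by
  have h1 : ∑ x, ∑ y ∈ G.neighborFinset x, g x * (f x - f y) = ∑ x, g x * lap G f x := by
    refine Finset.sum_congr rfl fun x _ => ?_
    rw [lap, Finset.mul_sum]
  have h2 : ∑ x, ∑ y ∈ G.neighborFinset x, g y * (f x - f y)
      = - ∑ x, g x * lap G f x := by
    rw [swap_sum G (fun x y => g y * (f x - f y)), ← h1, ← Finset.sum_neg_distrib]
    refine Finset.sum_congr rfl fun x _ => ?_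
    rw [← Finset.sum_neg_distrib]
    exact Finset.sum_congr rfl fun y _ => by ring
  calc 2 * ∑ x, g x * lap G f x
      = (∑ x, ∑ y ∈ G.neighborFinset x, g x * (f x - f y))
        - ∑ x, ∑ y ∈ G.neighborFinset x, g y * (f x - f y) := by rw [h1, h2]; ring
    _ = _ := by
        rw [← Finset.sum_sub_distrib]
        refine Finset.sum_congr rfl fun x _ => ?_
        rw [← Finset.sum_sub_distrib]
        exact Finset.sum_congr rfl fun y _ => by ring

lemma green_self (G : SimpleGraph V) (f : V → ℝ) :
    2 * ∑ x, f x * lap G f x = en G f := by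
  rw [green, en]
  exact Finset.sum_congr rfl fun x _ => Finset.sum_congr rfl fun y _ => by ring

lemma sum_lap (G : SimpleGraph V) (f : V → ℝ) : ∑ x, lap G f x = 0 := by
  have h := green G f (fun _ => 1)
  simp only [one_mul, sub_self, zero_mul, Finset.sum_const_zero] at h
  linarith

/-- On a preconnected graph, a function with equal values on adjacent vertices is constant. -/
lemma const_of_forall_adj {G : SimpleGraph V} (h : G.Preconnected)
    {f : V → ℝ} (hf : ∀ x y, G.Adj x y → f x = f y) (x y : V) : f x = f y := by
  obtain ⟨w⟩ := h x y
  induction w with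
  | nil => rfl
  | cons a p ih => exact (hf _ _ a).trans ih

/-- If the energy vanishes on a preconnected graph, the function is constant. -/
lemma const_of_en_zero {G : SimpleGraph V} (h : G.Preconnected)
    {f : V → ℝ} (hf : en G f = 0) (x y : V) : f x = f y := by
  refine const_of_forall_adj h (fun a b hab => ?_) x y
  have h1 : ∀ a ∈ Finset.univ, ∀ b ∈ G.neighborFinset a, ((f a - f b) ^ 2 : ℝ) = 0 := by
    intro a _
    have := (Finset.sum_eq_zero_iff_of_nonneg
      (fun c _ => Finset.sum_nonneg fun d _ => sq_nonneg (f c - f d))).mp hf a (Finset.mem_univ a)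
    exact fun b hb => (Finset.sum_eq_zero_iff_of_nonneg (fun d _ => sq_nonneg _)).mp this b hb
  have := h1 a (Finset.mem_univ a) b (by rwa [SimpleGraph.mem_neighborFinset])
  have := sq_eq_zero_iff.mp this
  linarith

section LinMaps
variable (G : SimpleGraph V)

/-- The linear Laplacian. -/
noncomputable def lapL : (V → ℝ) →ₗ[ℝ] (V → ℝ) where
  toFun f := lap G f
  map_add' f g := by
    funext x
    simp only [lap, Pi.add_apply]
    rw [← Finset.sum_add_distrib]
    exact Finset.sum_congr rfl fun y _ => by ring
  map_smul' c f := by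
    funext x
    simp only [lap, Pi.smul_apply, smul_eq_mul, RingHom.id_apply]
    rw [Finset.mul_sum]
    exact Finset.sum_congr rfl fun y _ => by ring

/-- Extension by zero from the boundary. -/
noncomputable def extB : ({x : V // x ∈ bdry G} → ℝ) →ₗ[ℝ] (V → ℝ) where
  toFun b := fun v => if hv : v ∈ bdry G then b ⟨v, hv⟩ else 0
  map_add' b c := by funext v; by_cases hv : v ∈ bdry G <;> simp [hv]
  map_smul' r b := by funext v; by_cases hv : v ∈ bdry G <;> simp [hv]

/-- Extension by zero from the interior. -/
noncomputable def extI : ({x : V // x ∉ bdry G} → ℝ) →ₗ[ℝ] (V → ℝ) where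
  toFun b := fun v => if hv : v ∈ bdry G then 0 else b ⟨v, hv⟩
  map_add' b c := by funext v; by_cases hv : v ∈ bdry G <;> simp [hv]
  map_smul' r b := by funext v; by_cases hv : v ∈ bdry G <;> simp [hv]

/-- Restriction to the interior. -/
noncomputable def restI : (V → ℝ) →ₗ[ℝ] ({x : V // x ∉ bdry G} → ℝ) where
  toFun f := fun x => f x.1
  map_add' _ _ := rfl
  map_smul' _ _ := rfl

/-- Restriction to the boundary. -/
noncomputable def restB : (V → ℝ) →ₗ[ℝ] ({x : V // x ∈ bdry G} → ℝ) where
  toFun f := fun x => f x.1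
  map_add' _ _ := rfl
  map_smul' _ _ := rfl

lemma lap_add (G : SimpleGraph V) (f g : V → ℝ) (x : V) :
    lap G (f + g) x = lap G f x + lap G g x :=
  congrFun (map_add (lapL G) f g) x

lemma lap_sub (G : SimpleGraph V) (f g : V → ℝ) (x : V) :
    lap G (f - g) x = lap G f x - lap G g x :=
  congrFun (map_sub (lapL G) f g) x

/-- The interior Laplacian. -/
noncomputable def AInt : ({x : V // x ∉ bdry G} → ℝ) →ₗ[ℝ] ({x : V // x ∉ bdry G} → ℝ) :=
  (restI G) ∘ₗ (lapL G) ∘ₗ (extI G)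

variable {G}

lemma AInt_bijective (hconn : G.Preconnected) (hB : (bdry G).Nonempty) :
    Function.Bijective (AInt G) := by
  rw [Function.Bijective, and_iff_left_of_imp (LinearMap.injective_iff_surjective).mp]
  rw [← LinearMap.ker_eq_bot, LinearMap.ker_eq_bot']
  intro h hh
  set f : V → ℝ := extI G h with hf
  have hfB : ∀ x ∈ bdry G, f x = 0 := by
    intro x hx; simp [hf, extI, hx]
  have hfI : ∀ x, x ∉ bdry G → lap G f x = 0 := by
    intro x hx
    have := congrFun hh ⟨x, hx⟩
    simpa [AInt, restI, lapL] using this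
  have hsum : ∑ x, f x * lap G f x = 0 := by
    refine Finset.sum_eq_zero fun x _ => ?_
    by_cases hx : x ∈ bdry G
    · rw [hfB x hx, zero_mul]
    · rw [hfI x hx, mul_zero]
  have hen : en G f = 0 := by rw [← green_self]; rw [hsum]; ring
  obtain ⟨b, hb⟩ := hB
  funext x
  have h1 : f x.1 = f b := const_of_en_zero hconn hen x.1 b
  have h2 : f x.1 = h x := by simp [hf, extI, x.2]
  have h3 : f b = 0 := hfB b hb
  simp only [Pi.zero_apply]
  rw [← h2, h1, h3]

/-- The harmonic extension operator. -/
noncomputable def harmExt (hconn : G.Preconnected) (hB : (bdry G).Nonempty) :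
    ({x : V // x ∈ bdry G} → ℝ) →ₗ[ℝ] (V → ℝ) :=
  (extB G) + (extI G) ∘ₗ ((LinearEquiv.ofBijective (AInt G)
      (AInt_bijective hconn hB)).symm.toLinearMap) ∘ₗ
    (-((restI G) ∘ₗ (lapL G) ∘ₗ (extB G)))

lemma harmExt_bdry (hconn : G.Preconnected) (hB : (bdry G).Nonempty)
    (b : {x : V // x ∈ bdry G} → ℝ) (x : V) (hx : x ∈ bdry G) :
    harmExt hconn hB b x = b ⟨x, hx⟩ := by
  simp [harmExt, extB, extI, hx]

lemma harmExt_harm (hconn : G.Preconnected) (hB : (bdry G).Nonempty)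
    (b : {x : V // x ∈ bdry G} → ℝ) (x : V) (hx : x ∉ bdry G) :
    lap G (harmExt hconn hB b) x = 0 := by
  set e := LinearEquiv.ofBijective (AInt G) (AInt_bijective hconn hB)
  set h := e.symm (-(restI G ∘ₗ lapL G ∘ₗ extB G) b) with hh
  have key : AInt G h = -(restI G ∘ₗ lapL G ∘ₗ extB G) b := e.apply_symm_apply _
  have : lap G (harmExt hconn hB b) x = lap G (extB G b) x + lap G (extI G h) x := by
    have heq : harmExt hconn hB b = extB G b + extI G h := by
      simp only [harmExt, LinearMap.add_apply, LinearMap.coe_comp, Function.comp_apply]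
      rfl
    rw [heq, lap_add]
  rw [this]
  have := congrFun key ⟨x, hx⟩
  simp only [AInt, LinearMap.coe_comp, Function.comp_apply, LinearMap.neg_apply,
    Pi.neg_apply] at this
  have h2 : lap G (extI G h) x = - lap G (extB G b) x := this
  rw [h2]; ring

/-- Uniqueness of harmonic extensions. -/
lemma harm_unique (hconn : G.Preconnected) (hB : (bdry G).Nonempty)
    {f g : V → ℝ} (hfg : ∀ x ∈ bdry G, f x = g x)
    (hf : ∀ x, x ∉ bdry G → lap G f x = 0) (hg : ∀ x, x ∉ bdry G → lap G g x = 0) :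
    f = g := by
  set d : V → ℝ := f - g with hd
  have hdB : ∀ x ∈ bdry G, d x = 0 := fun x hx => by simp [hd, hfg x hx]
  have hdI : ∀ x, x ∉ bdry G → lap G d x = 0 := by
    intro x hx
    rw [hd, lap_sub, hf x hx, hg x hx]; ring
  have hsum : ∑ x, d x * lap G d x = 0 := by
    refine Finset.sum_eq_zero fun x _ => ?_
    by_cases hx : x ∈ bdry G
    · rw [hdB x hx, zero_mul]
    · rw [hdI x hx, mul_zero]
  have hen : en G d = 0 := by rw [← green_self]; rw [hsum]; ring
  obtain ⟨b, hb⟩ := hB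
  funext x
  have h1 : d x = d b := const_of_en_zero hconn hen x b
  have h3 : d b = 0 := hdB b hb
  have : d x = 0 := h1.trans h3
  have : f x - g x = 0 := this
  linarith
end LinMaps

section Spectral
open RealInnerProductSpace
variable {G : SimpleGraph V}

/-- The Dirichlet-to-Neumann operator. -/
noncomputable def DtN (hconn : G.Preconnected) (hB : (bdry G).Nonempty) :
    EuclideanSpace ℝ {x : V // x ∈ bdry G} →ₗ[ℝ] EuclideanSpace ℝ {x : V // x ∈ bdry G} :=
  (WithLp.linearEquiv 2 ℝ ({x : V // x ∈ bdry G} → ℝ)).symm.toLinearMap ∘ₗ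
    (restB G) ∘ₗ (lapL G) ∘ₗ (harmExt hconn hB) ∘ₗ
    (WithLp.linearEquiv 2 ℝ ({x : V // x ∈ bdry G} → ℝ)).toLinearMap

lemma DtN_apply (hconn : G.Preconnected) (hB : (bdry G).Nonempty)
    (b : EuclideanSpace ℝ {x : V // x ∈ bdry G}) (i : {x : V // x ∈ bdry G}) :
    DtN hconn hB b i = lap G (harmExt hconn hB b) i.1 := rfl

lemma sum_bdry_eq (F : V → ℝ) :
    ∑ x ∈ bdry G, F x = ∑ i : {x : V // x ∈ bdry G}, F i.1 := by
  rw [← Finset.sum_coe_sort (bdry G) F]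

lemma inner_DtN (hconn : G.Preconnected) (hB : (bdry G).Nonempty)
    (b c : EuclideanSpace ℝ {x : V // x ∈ bdry G}) :
    ⟪b, DtN hconn hB c⟫ = ∑ x, harmExt hconn hB b x * lap G (harmExt hconn hB c) x := by
  rw [PiLp.inner_apply]
  have split : (Finset.univ : Finset V) = (bdry G) ∪ (bdry G)ᶜ := by
    simp
  rw [show (∑ x, harmExt hconn hB b x * lap G (harmExt hconn hB c) x)
      = (∑ x ∈ bdry G, harmExt hconn hB b x * lap G (harmExt hconn hB c) x)
        + ∑ x ∈ (bdry G)ᶜ, harmExt hconn hB b x * lap G (harmExt hconn hB c) x from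
    (Finset.sum_add_sum_compl _ _).symm]
  have h2 : ∑ x ∈ (bdry G)ᶜ, harmExt hconn hB b x * lap G (harmExt hconn hB c) x = 0 := by
    refine Finset.sum_eq_zero fun x hx => ?_
    rw [harmExt_harm hconn hB c x (by simpa using hx), mul_zero]
  rw [h2, add_zero, sum_bdry_eq]
  refine Finset.sum_congr rfl fun i _ => ?_
  rw [harmExt_bdry hconn hB b i.1 i.2, DtN_apply]
  simp [RCLike.inner_apply, mul_comm]

lemma inner_DtN_symm_aux (hconn : G.Preconnected) (hB : (bdry G).Nonempty)
    (b c : EuclideanSpace ℝ {x : V // x ∈ bdry G}) :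
    ⟪b, DtN hconn hB c⟫ = ⟪c, DtN hconn hB b⟫ := by
  rw [inner_DtN, inner_DtN]
  set f := harmExt hconn hB b
  set g := harmExt hconn hB c
  have h1 := green G g f
  have h2 := green G f g
  have h3 : ∑ x, ∑ y ∈ G.neighborFinset x, (f x - f y) * (g x - g y)
      = ∑ x, ∑ y ∈ G.neighborFinset x, (g x - g y) * (f x - f y) :=
    Finset.sum_congr rfl fun x _ => Finset.sum_congr rfl fun y _ => by ring
  linarith

lemma DtN_isSymmetric (hconn : G.Preconnected) (hB : (bdry G).Nonempty) :
    (DtN hconn hB).IsSymmetric := by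
  intro b c
  rw [real_inner_comm, inner_DtN_symm_aux]

lemma inner_DtN_self (hconn : G.Preconnected) (hB : (bdry G).Nonempty)
    (b : EuclideanSpace ℝ {x : V // x ∈ bdry G}) :
    ⟪b, DtN hconn hB b⟫ = en G (harmExt hconn hB b) / 2 := by
  rw [inner_DtN, ← green_self]
  ring

lemma DtN_nonneg (hconn : G.Preconnected) (hB : (bdry G).Nonempty)
    (b : EuclideanSpace ℝ {x : V // x ∈ bdry G}) :
    0 ≤ ⟪b, DtN hconn hB b⟫ := by
  rw [inner_DtN_self]
  have := en_nonneg G (harmExt hconn hB b)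
  linarith

lemma DtN_const (hconn : G.Preconnected) (hB : (bdry G).Nonempty)
    (b : EuclideanSpace ℝ {x : V // x ∈ bdry G})
    (hb : ⟪b, DtN hconn hB b⟫ = 0) (i j : {x : V // x ∈ bdry G}) : b i = b j := by
  have hen : en G (harmExt hconn hB b) = 0 := by
    rw [inner_DtN_self] at hb; linarith
  have := const_of_en_zero hconn hen i.1 j.1
  rwa [harmExt_bdry hconn hB b i.1 i.2, harmExt_bdry hconn hB b j.1 j.2] at this
end Spectral

section MainSpectral
open RealInnerProductSpace
variable {G : SimpleGraph V}

lemma harmExt_restB (hconn : G.Preconnected) (hB : (bdry G).Nonempty)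
    {g : V → ℝ} (hg : ∀ x, x ∉ bdry G → lap G g x = 0) :
    harmExt hconn hB (fun i => g i.1) = g := by
  refine harm_unique hconn hB (fun x hx => ?_) (harmExt_harm hconn hB _) hg
  rw [harmExt_bdry hconn hB _ x hx]

/-- The key spectral lemma: any boundary-mean-zero harmonic test function bounds some
positive Steklov eigenvalue from above. -/
lemma exists_eig_le (hconn : G.Preconnected) (hB : (bdry G).Nonempty)
    (g : V → ℝ) (hg : ∀ x, x ∉ bdry G → lap G g x = 0)
    (hmean : ∑ x ∈ bdry G, g x = 0) (hQ : ∑ x ∈ bdry G, g x ^ 2 ≠ 0) :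
    ∃ lam f, 0 < lam ∧ IsEigenpair G lam f ∧
      lam * ∑ x ∈ bdry G, g x ^ 2 ≤ en G g / 2 := by
  classical
  set ι := {x : V // x ∈ bdry G}
  set T := DtN hconn hB with hT
  have hsym := DtN_isSymmetric hconn hB
  have hn : Module.finrank ℝ (EuclideanSpace ℝ ι) = Fintype.card ι := finrank_euclideanSpace
  set e := hsym.eigenvectorBasis hn with he
  set μ := hsym.eigenvalues hn with hμ
  have heig : ∀ i, T (e i) = μ i • e i := fun i => hsym.apply_eigenvectorBasis hn i
  set b : EuclideanSpace ℝ ι := WithLp.toLp 2 (fun i : ι => g i.1) with hb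
  have hext : harmExt hconn hB b = g := harmExt_restB hconn hB hg
  set c : Fin (Fintype.card ι) → ℝ := fun i => ⟪e i, b⟫ with hc
  -- basic inner product computations
  have hbb : ⟪b, b⟫ = ∑ x ∈ bdry G, g x ^ 2 := by
    rw [PiLp.inner_apply, sum_bdry_eq]
    refine Finset.sum_congr rfl fun i _ => ?_
    simp [hb, RCLike.inner_apply]
  have hsum1 : ∑ i : ι, b i = 0 := by
    rw [← hmean, sum_bdry_eq]
  have hbne : b ≠ 0 := by
    intro h0
    apply hQ
    rw [← hbb, h0, inner_zero_left]
  -- expansion lemmas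
  have hinner : ∀ y : EuclideanSpace ℝ ι, ⟪b, y⟫ = ∑ i, c i * ⟪e i, y⟫ := by
    intro y
    conv_lhs => rw [← e.sum_repr' b]
    rw [sum_inner]
    exact Finset.sum_congr rfl fun i _ => real_inner_smul_left _ _ _
  have hbb2 : ⟪b, b⟫ = ∑ i, c i ^ 2 := by
    rw [hinner b]
    exact Finset.sum_congr rfl fun i _ => by rw [hc]; ring
  have hTb : ⟪b, T b⟫ = ∑ i, μ i * c i ^ 2 := by
    rw [hinner (T b)]
    refine Finset.sum_congr rfl fun i _ => ?_
    have : ⟪e i, T b⟫ = ⟪T (e i), b⟫ := (hsym (e i) b).symm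
    rw [this, heig i, real_inner_smul_left]
    ring
  -- the support of b in the eigenbasis
  have hPne : ∃ i, c i ≠ 0 := by
    by_contra h
    push_neg at h
    apply hbne
    have := e.sum_repr' b
    rw [← this]
    refine Finset.sum_eq_zero fun i _ => ?_
    rw [show ⟪e i, b⟫ = c i from rfl, h i, zero_smul]
  -- all eigenvalues in the support are positive
  have hpos : ∀ i, c i ≠ 0 → 0 < μ i := by
    intro i hci
    have hnn : 0 ≤ μ i := by
      have h1 : ⟪e i, T (e i)⟫ = μ i * ⟪e i, e i⟫ := by
        rw [heig i, real_inner_smul_right]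
      have h2 : ⟪e i, e i⟫ = 1 := by
        have hn1 := e.orthonormal.1 i
        rw [real_inner_self_eq_norm_sq, hn1]; norm_num
      have := DtN_nonneg hconn hB (e i)
      rw [← hT] at this
      rw [h1, h2, mul_one] at this
      exact this
    rcases hnn.lt_or_eq with h | h
    · exact h
    · exfalso
      -- μ i = 0 : then e i is constant on the boundary, so c i = 0
      have hTei : T (e i) = 0 := by rw [heig i, ← h, zero_smul]
      have hconst : ∀ j k : ι, e i j = e i k := by
        intro j k
        refine DtN_const hconn hB (e i) ?_ j k
        rw [← hT, hTei, inner_zero_right]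
      obtain ⟨x₀, hx₀⟩ := hB
      set κ := e i ⟨x₀, hx₀⟩ with hκ
      apply hci
      show ⟪e i, b⟫ = 0
      have : ⟪e i, b⟫ = ∑ j : ι, κ * b j := by
        rw [PiLp.inner_apply]
        refine Finset.sum_congr rfl fun j _ => ?_
        rw [RCLike.inner_apply]
        simp [hconst j ⟨x₀, hx₀⟩]
        rw [hκ]; ring
      rw [this, ← Finset.mul_sum, hsum1, mul_zero]
  -- pick the minimal eigenvalue in the support
  obtain ⟨i₀, hi₀⟩ := hPne
  obtain ⟨j₀, hj₀mem, hj₀min⟩ := Finset.exists_min_image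
    (Finset.univ.filter fun i => c i ≠ 0) μ ⟨i₀, by simp [hi₀]⟩
  have hj₀ : c j₀ ≠ 0 := by simpa using hj₀mem
  have hμ₀pos : 0 < μ j₀ := hpos j₀ hj₀
  refine ⟨μ j₀, harmExt hconn hB (e j₀), hμ₀pos, ?_, ?_⟩
  · -- eigenpair
    refine ⟨?_, harmExt_harm hconn hB _, ?_⟩
    · intro h0
      have : e j₀ = 0 := by
        ext j
        have := congrFun h0 j.1
        rwa [harmExt_bdry hconn hB _ j.1 j.2] at this
      have h2 := e.orthonormal.1 j₀
      rw [this] at h2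
      simp at h2
    · intro x hx
      have h1 : lap G (harmExt hconn hB (e j₀)) x = T (e j₀) ⟨x, hx⟩ := rfl
      rw [h1, heig j₀, harmExt_bdry hconn hB _ x hx]
      rfl
  · -- Rayleigh bound
    have key : μ j₀ * ⟪b, b⟫ ≤ ⟪b, T b⟫ := by
      rw [hbb2, hTb, Finset.mul_sum]
      refine Finset.sum_le_sum fun i _ => ?_
      by_cases hci : c i ≠ 0
      · have : μ j₀ ≤ μ i := hj₀min i (by simpa using hci)
        nlinarith [sq_nonneg (c i)]
      · push_neg at hci
        rw [hci]; ring_nf; exact le_refl _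
    have h2 : ⟪b, T b⟫ = en G g / 2 := by
      rw [hT, inner_DtN_self, hext]
    rw [← hbb]
    rw [h2] at key
    exact key

/-- Facts about an eigenpair with a positive eigenvalue. -/
lemma eig_sum_zero {lam : ℝ} {f : V → ℝ} (hf : IsEigenpair G lam f) (hlam : lam ≠ 0) :
    ∑ x ∈ bdry G, f x = 0 := by
  obtain ⟨-, hint, hbd⟩ := hf
  have h1 : ∑ x, lap G f x = 0 := sum_lap G f
  have h2 : ∑ x, lap G f x
      = (∑ x ∈ bdry G, lap G f x) + ∑ x ∈ (bdry G)ᶜ, lap G f x :=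
    (Finset.sum_add_sum_compl _ _).symm
  have h3 : ∑ x ∈ (bdry G)ᶜ, lap G f x = 0 :=
    Finset.sum_eq_zero fun x hx => hint x (by simpa using hx)
  have h4 : ∑ x ∈ bdry G, lap G f x = lam * ∑ x ∈ bdry G, f x := by
    rw [Finset.mul_sum]
    exact Finset.sum_congr rfl fun x hx => hbd x hx
  rw [h2, h3, h4, add_zero] at h1
  exact (mul_eq_zero.mp h1).resolve_left hlam

lemma eig_Q_pos (hconn : G.Preconnected) (hB : (bdry G).Nonempty)
    {lam : ℝ} {f : V → ℝ} (hf : IsEigenpair G lam f) :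
    0 < ∑ x ∈ bdry G, f x ^ 2 := by
  obtain ⟨hne, hint, hbd⟩ := hf
  rcases (Finset.sum_nonneg fun x (_ : x ∈ bdry G) => sq_nonneg (f x)).lt_or_eq with h | h
  · exact h
  · exfalso
    have hzero : ∀ x ∈ bdry G, f x = 0 := by
      intro x hx
      have := (Finset.sum_eq_zero_iff_of_nonneg
        (fun y (_ : y ∈ bdry G) => sq_nonneg (f y))).mp h.symm x hx
      exact pow_eq_zero_iff (by norm_num) |>.mp this
    apply hne
    refine harm_unique hconn hB (fun x hx => ?_) hint (fun x _ => ?_)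
    · rw [hzero x hx]; rfl
    · show lap G 0 x = 0
      simp [lap]
  
lemma eig_en {lam : ℝ} {f : V → ℝ} (hf : IsEigenpair G lam f) :
    en G f / 2 = lam * ∑ x ∈ bdry G, f x ^ 2 := by
  obtain ⟨-, hint, hbd⟩ := hf
  have h1 := green_self G f
  have h2 : ∑ x, f x * lap G f x
      = (∑ x ∈ bdry G, f x * lap G f x) + ∑ x ∈ (bdry G)ᶜ, f x * lap G f x :=
    (Finset.sum_add_sum_compl _ _).symm
  have h3 : ∑ x ∈ (bdry G)ᶜ, f x * lap G f x = 0 :=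
    Finset.sum_eq_zero fun x hx => by rw [hint x (by simpa using hx), mul_zero]
  have h4 : ∑ x ∈ bdry G, f x * lap G f x = lam * ∑ x ∈ bdry G, f x ^ 2 := by
    rw [Finset.mul_sum]
    refine Finset.sum_congr rfl fun x hx => ?_
    rw [hbd x hx]; ring
  rw [h2, h3, h4, add_zero] at h1
  linarith
end MainSpectral

section Pendant
variable {G : SimpleGraph V}

lemma degree_eq_one_iff_mem_bdry {v : V} : v ∈ bdry G ↔ G.degree v = 1 := by
  simp [bdry]

/-- Degree in the induced subgraph on the complement of a leaf `u`. -/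
lemma induce_degree (u : V) (a : {v : V // v ∈ {v : V | v ≠ u}}) :
    (G.induce {v : V | v ≠ u}).degree a
      = if G.Adj a.1 u then G.degree a.1 - 1 else G.degree a.1 := by
  classical
  have h1 : (G.induce {v : V | v ≠ u}).neighborFinset a
      = Finset.univ.filter (fun b : {v : V // v ∈ {v : V | v ≠ u}} => G.Adj a.1 b.1) := by
    rw [SimpleGraph.neighborFinset_eq_filter]
    exact Finset.filter_congr fun b _ => Iff.rfl
  have h2 : ((G.induce {v : V | v ≠ u}).neighborFinset a).card
      = ((G.neighborFinset a.1).erase u).card := by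
    rw [h1]
    refine Finset.card_bij (fun b _ => b.1) ?_ ?_ ?_
    · intro b hb
      simp only [Finset.mem_filter] at hb
      rw [Finset.mem_erase, SimpleGraph.mem_neighborFinset]
      exact ⟨b.2, hb.2⟩
    · intro b _ c _ h
      exact Subtype.ext h
    · intro y hy
      rw [Finset.mem_erase, SimpleGraph.mem_neighborFinset] at hy
      exact ⟨⟨y, hy.1⟩, by simp [hy.2], rfl⟩
  rw [SimpleGraph.degree, h2]
  by_cases hadj : G.Adj a.1 u
  · rw [if_pos hadj, Finset.card_erase_of_mem (by rwa [SimpleGraph.mem_neighborFinset]),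
      SimpleGraph.degree]
  · rw [if_neg hadj, Finset.erase_eq_of_notMem
      (by rwa [SimpleGraph.mem_neighborFinset]), SimpleGraph.degree]

/-- A leaf has a unique neighbor. -/
lemma leaf_neighbor {u : V} (hu : G.degree u = 1) :
    ∃ v₀, G.Adj u v₀ ∧ ∀ w, G.Adj u w → w = v₀ := by
  rw [SimpleGraph.degree, Finset.card_eq_one] at hu
  obtain ⟨v₀, hv₀⟩ := hu
  refine ⟨v₀, ?_, ?_⟩
  · rw [← SimpleGraph.mem_neighborFinset, hv₀]; exact Finset.mem_singleton_self _
  · intro w hw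
    rw [← SimpleGraph.mem_neighborFinset, hv₀, Finset.mem_singleton] at hw
    exact hw

/-- The neighbor of a leaf in a preconnected graph with at least 3 vertices has degree ≥ 2. -/
lemma leaf_neighbor_degree (hconn : G.Preconnected) (hcard : 3 ≤ Fintype.card V)
    {u v₀ : V} (hu : G.degree u = 1) (hadj : G.Adj u v₀)
    (huniq : ∀ w, G.Adj u w → w = v₀) :
    ∃ y, G.Adj v₀ y ∧ y ≠ u := by
  classical
  -- pick a third vertex
  have : ∃ w, w ≠ u ∧ w ≠ v₀ := by
    by_contra h
    push_neg at h
    have : (Finset.univ : Finset V) ⊆ {u, v₀} := by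
      intro w _
      rcases eq_or_ne w u with h1 | h1
      · simp [h1]
      · simp [h w h1]
    have := Finset.card_le_card this
    have hc : Fintype.card V ≤ 2 := le_trans (by simpa using this) (Finset.card_insert_le _ _ |>.trans (by simp))
    omega
  obtain ⟨w, hwu, hwv⟩ := this
  obtain ⟨q⟩ := hconn u w
  obtain ⟨p, hp⟩ := q.toPath
  cases p with
  | nil => exact absurd rfl hwu.symm
  | cons h q' =>
    rename_i x
    have hx : x = v₀ := huniq x h
    subst hx
    cases q' with
    | nil => exact absurd rfl hwv.symm
    | cons h2 r =>
      rename_i c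
      rw [SimpleGraph.Walk.cons_isPath_iff] at hp
      have hcmem : c ∈ (SimpleGraph.Walk.cons h2 r).support := by
        rw [SimpleGraph.Walk.support_cons]
        exact List.mem_cons_of_mem _ r.start_mem_support
      exact ⟨c, h2, fun hc => hp.2 (hc ▸ hcmem)⟩

end Pendant

section Pendant2
variable {G : SimpleGraph V} {u : V}

lemma mem_S {x : V} (hx : x ≠ u) : x ∈ {v : V | v ≠ u} := hx

lemma helper_nbr (x : {v : V // v ∈ {v : V | v ≠ u}}) (F : V → ℝ) :
    ∑ d ∈ (G.induce {v : V | v ≠ u}).neighborFinset x, F d.1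
      = ∑ y ∈ (G.neighborFinset x.1).erase u, F y := by
  refine Finset.sum_bij (fun d _ => d.1) ?_ ?_ ?_ ?_
  · intro d hd
    rw [SimpleGraph.mem_neighborFinset] at hd
    rw [Finset.mem_erase, SimpleGraph.mem_neighborFinset]
    exact ⟨d.2, hd⟩
  · intro d _ e _ h; exact Subtype.ext h
  · intro y hy
    rw [Finset.mem_erase, SimpleGraph.mem_neighborFinset] at hy
    exact ⟨⟨y, hy.1⟩, by rw [SimpleGraph.mem_neighborFinset]; exact hy.2, rfl⟩
  · intro d _; rfl

/-- Transfer of the Laplacian between `G` and the induced subgraph. -/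
lemma lap_transfer (g : V → ℝ) (f : {v : V // v ∈ {v : V | v ≠ u}} → ℝ)
    (hgf : ∀ d : {v : V // v ∈ {v : V | v ≠ u}}, g d.1 = f d)
    (x : V) (hx : x ≠ u) :
    lap G g x = lap (G.induce {v : V | v ≠ u}) f ⟨x, hx⟩
      + (if G.Adj x u then g x - g u else 0) := by
  rw [lap, lap]
  by_cases hadj : G.Adj x u
  · rw [if_pos hadj]
    have hmem : u ∈ G.neighborFinset x := by rwa [SimpleGraph.mem_neighborFinset]
    rw [← Finset.add_sum_erase _ _ hmem]
    rw [← helper_nbr (G := G) ⟨x, hx⟩ (fun y => g x - g y)]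
    have hcg : ∀ d ∈ ((G.induce {v : V | v ≠ u}).neighborFinset ⟨x, hx⟩),
        (f ⟨x, hx⟩ - f d : ℝ) = (g x - g d.1) := by
      intro d _; rw [← hgf ⟨x, hx⟩, hgf d]
    rw [add_comm]; congr 1; convert (Finset.sum_congr rfl hcg).symm
  · rw [if_neg hadj]
    have hmem : u ∉ G.neighborFinset x := by rwa [SimpleGraph.mem_neighborFinset]
    rw [show (G.neighborFinset x) = (G.neighborFinset x).erase u from
      (Finset.erase_eq_of_notMem hmem).symm]
    rw [← helper_nbr (G := G) ⟨x, hx⟩ (fun y => g x - g y)]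
    have hcg : ∀ d ∈ ((G.induce {v : V | v ≠ u}).neighborFinset ⟨x, hx⟩),
        (f ⟨x, hx⟩ - f d : ℝ) = (g x - g d.1) := by
      intro d _; rw [← hgf ⟨x, hx⟩, hgf d]
    rw [add_zero]; convert (Finset.sum_congr rfl hcg).symm

/-- The boundary of `G` in terms of the boundary of the induced subgraph. -/
lemma bdry_transfer (hu : G.degree u = 1) {v₀ : V} (hadj : G.Adj u v₀)
    (huniq : ∀ w, G.Adj u w → w = v₀) (hv₀ : G.degree v₀ ≠ 1) :
    bdry G = insert u (((bdry (G.induce {v : V | v ≠ u})).erase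
      ⟨v₀, mem_S hadj.ne'⟩).image Subtype.val) := by
  ext x
  simp only [Finset.mem_insert, Finset.mem_image, Finset.mem_erase]
  constructor
  · intro hx
    rw [degree_eq_one_iff_mem_bdry] at hx
    by_cases hxu : x = u
    · exact Or.inl hxu
    · right
      have hxv₀ : x ≠ v₀ := fun h => hv₀ (h ▸ hx)
      have hnadj : ¬ G.Adj x u := fun h => hxv₀ (huniq x h.symm)
      refine ⟨⟨x, mem_S hxu⟩, ⟨?_, ?_⟩, rfl⟩
      · exact fun h => hxv₀ (congrArg Subtype.val h)
      · rw [degree_eq_one_iff_mem_bdry]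
        convert (induce_degree (G := G) u ⟨x, mem_S hxu⟩).trans ((if_neg hnadj).trans hx)
  · intro hx
    rcases hx with hxu | ⟨d, ⟨hdv₀, hd⟩, hdx⟩
    · rw [hxu, degree_eq_one_iff_mem_bdry]; exact hu
    · rw [degree_eq_one_iff_mem_bdry] at hd ⊢
      replace hd : (if G.Adj d.1 u then G.degree d.1 - 1 else G.degree d.1) = 1 :=
        (induce_degree (G := G) u d).symm.trans (by convert hd)
      subst hdx
      by_cases hadj2 : G.Adj d.1 u
      · exfalso
        exact hdv₀ (Subtype.ext (huniq d.1 hadj2.symm))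
      · rwa [if_neg hadj2] at hd
end Pendant2

section Pendant3
variable {G : SimpleGraph V}

lemma lap_const (G : SimpleGraph V) (c : ℝ) (x : V) : lap G (fun _ => c) x = 0 := by
  rw [lap]; simp

lemma lap_shift (g : V → ℝ) (c : ℝ) (x : V) : lap G (fun v => g v - c) x = lap G g x := by
  have : (fun v => g v - c) = g - (fun _ => c) := rfl
  rw [this, lap_sub, lap_const, sub_zero]

lemma en_shift (g : V → ℝ) (c : ℝ) : en G (fun v => g v - c) = en G g := by
  rw [en, en]
  refine Finset.sum_congr rfl fun x _ => Finset.sum_congr rfl fun y _ => by ring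

lemma algc (s m : ℝ) (hm : m ≠ 0) : -(2 * (s / m) * s) + m * (s / m) ^ 2 = -(s ^ 2 / m) := by
  field_simp
  ring

lemma arithA (QH gu m : ℝ) (hQH : 0 < QH) (hm1 : 1 ≤ m) :
    0 < gu ^ 2 + QH - gu ^ 2 / m := by
  have := div_le_self (sq_nonneg gu) hm1
  linarith

lemma arithB (QH a lam m : ℝ) (hQH : 0 < QH) (hm1 : 1 ≤ m) (hlam : 0 < lam) :
    0 < (a + lam * a) ^ 2 + QH - a ^ 2 - (lam * a) ^ 2 / m := by
  have h1 := div_le_self (sq_nonneg (lam * a)) hm1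
  nlinarith [sq_nonneg a, mul_pos hlam hlam, sq_nonneg (lam * a)]

lemma arithC (QH gu lam m : ℝ) (hQH : 0 < QH) (hm1 : 1 ≤ m) (hlam : 0 < lam) :
    lam * QH + 0 ^ 2 ≤ lam * (gu ^ 2 + QH - gu ^ 2 / m) := by
  have h1 := div_le_self (sq_nonneg gu) hm1
  nlinarith

lemma arithD (QH a lam m : ℝ) (hQH : 0 < QH) (hm1 : 1 ≤ m) (hlam : 0 < lam) :
    lam * QH + (lam * a) ^ 2
      ≤ lam * ((a + lam * a) ^ 2 + QH - a ^ 2 - (lam * a) ^ 2 / m) := by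
  have h1 : 0 ≤ (lam * a) ^ 2 - (lam * a) ^ 2 / m :=
    sub_nonneg.mpr (div_le_self (sq_nonneg (lam * a)) hm1)
  nlinarith [mul_nonneg hlam.le h1, sq_nonneg a, mul_pos hlam hlam, sq_nonneg (lam * a)]

set_option maxHeartbeats 1000000 in
/-- Key pendant lemma: attaching a pendant vertex can only decrease positive
Steklov eigenvalues, in the sense that below each positive eigenvalue of the smaller
graph there is one of the bigger graph. -/
lemma pendant_le (hconn : G.Preconnected) (hcard : 3 ≤ Fintype.card V)
    {u : V} (hu : G.degree u = 1)
    (hHconn : (G.induce {v : V | v ≠ u}).Preconnected)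
    (hBH : (bdry (G.induce {v : V | v ≠ u})).Nonempty)
    {lam : ℝ} {f : {v : V // v ∈ {v : V | v ≠ u}} → ℝ} (hlam : 0 < lam)
    (hf : IsEigenpair (G.induce {v : V | v ≠ u}) lam f) :
    ∃ mu, 0 < mu ∧ (∃ h : V → ℝ, IsEigenpair G mu h) ∧ mu ≤ lam := by
  classical
  set H := G.induce {v : V | v ≠ u} with hHdef
  obtain ⟨v₀, hadj, huniq⟩ := leaf_neighbor hu
  have hv₀u : v₀ ≠ u := hadj.ne'
  obtain ⟨y₀, hy₀, hy₀u⟩ := leaf_neighbor_degree hconn hcard hu hadj huniq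
  have hNu : G.neighborFinset u = {v₀} := by
    have h1 : (G.neighborFinset u).card = 1 := hu
    rw [Finset.card_eq_one] at h1
    obtain ⟨w, hw⟩ := h1
    have : v₀ ∈ G.neighborFinset u := by rwa [SimpleGraph.mem_neighborFinset]
    rw [hw] at this ⊢
    rw [Finset.mem_singleton] at this
    rw [this]
  have hdegv₀ : G.degree v₀ ≠ 1 := by
    have h2 : ({u, y₀} : Finset V) ⊆ G.neighborFinset v₀ := by
      intro z hz
      rw [Finset.mem_insert, Finset.mem_singleton] at hz
      rw [SimpleGraph.mem_neighborFinset]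
      rcases hz with h | h
      · rw [h]; exact hadj.symm
      · rw [h]; exact hy₀
    have h3 : 2 ≤ G.degree v₀ := by
      have := Finset.card_le_card h2
      rwa [Finset.card_insert_of_notMem (by simpa using hy₀u.symm),
        Finset.card_singleton] at this
    omega
  set vv₀ : {v : V // v ∈ {v : V | v ≠ u}} := ⟨v₀, mem_S hv₀u⟩ with hvv₀
  obtain ⟨hfne, hfint, hfbd⟩ := hf
  set a : ℝ := f vv₀ with ha
  set L : ℝ := lap H f vv₀ with hLdef
  set gu : ℝ := a + L with hgu
  set g : V → ℝ := fun v => if hv : v = u then gu else f ⟨v, mem_S hv⟩ with hgdef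
  have hg_sub : ∀ d : {v : V // v ∈ {v : V | v ≠ u}}, g d.1 = f d := by
    intro d
    have hd : d.1 ≠ u := d.2
    simp only [hgdef, dif_neg hd]
  have hg_u : g u = gu := by simp [hgdef]
  have hg_v₀ : g v₀ = a := by rw [show g v₀ = f vv₀ from hg_sub vv₀, ha]
  -- u is in the boundary of G
  have humem : u ∈ bdry G := degree_eq_one_iff_mem_bdry.mpr hu
  have hBG : (bdry G).Nonempty := ⟨u, humem⟩
  -- Laplacian of g at every non-u vertex
  have hlapg : ∀ (x : V) (hx : x ≠ u), lap G g x
      = lap H f ⟨x, mem_S hx⟩ + (if G.Adj x u then g x - gu else 0) := by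
    intro x hx
    rw [lap_transfer g f hg_sub x hx, hg_u]
  -- g is harmonic on the interior of G
  have hgharm : ∀ x, x ∉ bdry G → lap G g x = 0 := by
    intro x hxB
    have hxu : x ≠ u := fun h => hxB (h ▸ humem)
    rw [hlapg x hxu]
    by_cases hxv₀ : x = v₀
    · subst hxv₀
      rw [if_pos hadj.symm, hg_v₀]
      have : lap H f ⟨x, mem_S hxu⟩ = L := by
        rw [hLdef, hvv₀]
      rw [this, hgu]; ring
    · have hnadj : ¬ G.Adj x u := fun h => hxv₀ (huniq x h.symm)
      rw [if_neg hnadj, add_zero]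
      refine hfint _ ?_
      intro hmem
      apply hxB
      rw [degree_eq_one_iff_mem_bdry] at hmem ⊢
      have h2 := induce_degree (G := G) u ⟨x, mem_S hxu⟩
      rw [if_neg hnadj] at h2
      exact h2.symm.trans (by convert hmem)
  -- boundary transfer
  have hbd_eq := bdry_transfer hu hadj huniq hdegv₀
  have humem' : u ∉ ((bdry H).erase vv₀).image Subtype.val := by
    intro hmem
    rw [Finset.mem_image] at hmem
    obtain ⟨d, _, hd⟩ := hmem
    exact d.2 hd
  have hsumB : ∀ F : V → ℝ, ∑ x ∈ bdry G, F x
      = F u + ∑ b ∈ (bdry H).erase vv₀, F b.1 := by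
    intro F
    rw [hbd_eq, Finset.sum_insert humem', Finset.sum_image
      (fun b _ c _ h => Subtype.ext h)]
  set χ : ℝ := if vv₀ ∈ bdry H then 1 else 0 with hχ
  have hχ01 : χ = 0 ∨ χ = 1 := by
    rw [hχ]; split <;> simp
  have herase : ∀ F : {v : V // v ∈ {v : V | v ≠ u}} → ℝ,
      ∑ b ∈ (bdry H).erase vv₀, F b = (∑ b ∈ bdry H, F b) - χ * F vv₀ := by
    intro F
    by_cases hmem : vv₀ ∈ bdry H
    · rw [hχ, if_pos hmem, one_mul, eq_sub_iff_add_eq, add_comm,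
        Finset.add_sum_erase _ F hmem]
    · rw [hχ, if_neg hmem, Finset.erase_eq_of_notMem hmem, zero_mul, sub_zero]
  -- the relation L = χ * lam * a
  have hLval : L = χ * (lam * a) := by
    by_cases hmem : vv₀ ∈ bdry H
    · rw [hLdef, hfbd vv₀ hmem, hχ, if_pos hmem, ha]; ring
    · rw [hLdef, hfint vv₀ hmem, hχ, if_neg hmem]; ring
  -- eigenpair facts on H
  have hfeig : IsEigenpair H lam f := ⟨hfne, hfint, hfbd⟩
  have hfsum : ∑ x ∈ bdry H, f x = 0 := eig_sum_zero hfeig hlam.ne'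
  have hQH : 0 < ∑ x ∈ bdry H, f x ^ 2 := eig_Q_pos hHconn hBH hfeig
  set QH : ℝ := ∑ x ∈ bdry H, f x ^ 2 with hQHdef
  set m : ℝ := ((bdry G).card : ℝ) with hm
  have hm1 : 1 ≤ m := by
    rw [hm]
    exact_mod_cast Finset.card_pos.mpr hBG
  have hm0 : m ≠ 0 := by linarith
  -- sums of g over the boundary of G
  have hs : ∑ x ∈ bdry G, g x = gu - χ * a := by
    rw [hsumB g, hg_u, herase (fun b => g b.1)]
    have : ∀ b ∈ bdry H, g b.1 = f b := fun b _ => hg_sub b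
    rw [Finset.sum_congr rfl this, hfsum, hg_v₀]
    ring
  have hQg : ∑ x ∈ bdry G, g x ^ 2 = gu ^ 2 + QH - χ * a ^ 2 := by
    rw [hsumB (fun x => g x ^ 2), hg_u, herase (fun b => g b.1 ^ 2)]
    have : ∀ b ∈ bdry H, g b.1 ^ 2 = f b ^ 2 := fun b _ => by rw [hg_sub b]
    rw [Finset.sum_congr rfl this, hg_sub vv₀, ← ha]
    ring
  set s : ℝ := gu - χ * a with hsdef
  set c : ℝ := s / m with hc
  set gbar : V → ℝ := fun v => g v - c with hgbar
  -- mean zero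
  have hmean : ∑ x ∈ bdry G, gbar x = 0 := by
    rw [hgbar]
    rw [Finset.sum_sub_distrib, Finset.sum_const, hs, nsmul_eq_mul, ← hm, hc,
      mul_comm, div_mul_cancel₀ s hm0, sub_self]
  have hQbar : ∑ x ∈ bdry G, gbar x ^ 2 = (gu ^ 2 + QH - χ * a ^ 2) - s ^ 2 / m := by
    rw [hgbar]
    have expand : ∀ x, (g x - c) ^ 2 = g x ^ 2 - 2 * c * g x + c ^ 2 := fun x => by ring
    rw [Finset.sum_congr rfl fun x _ => expand x]
    rw [Finset.sum_add_distrib, Finset.sum_sub_distrib, hQg, ← Finset.mul_sum, hs,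
      Finset.sum_const, nsmul_eq_mul, ← hm, hc]
    have := algc s m hm0
    linarith
  -- energy computation
  have hen_g : en G g = en H f + 2 * L ^ 2 := by
    have hsplit : en G g = (∑ y ∈ G.neighborFinset u, (g u - g y) ^ 2)
        + ∑ x ∈ Finset.univ.erase u, ∑ y ∈ G.neighborFinset x, (g x - g y) ^ 2 := by
      rw [en, ← Finset.add_sum_erase _ _ (Finset.mem_univ u)]
    have h_u : ∑ y ∈ G.neighborFinset u, (g u - g y) ^ 2 = L ^ 2 := by
      rw [hNu, Finset.sum_singleton, hg_u, hg_v₀, hgu]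
      ring
    have h_rest : ∀ x ∈ Finset.univ.erase u,
        ∑ y ∈ G.neighborFinset x, (g x - g y) ^ 2
          = (∑ y ∈ (G.neighborFinset x).erase u, (g x - g y) ^ 2)
            + (if G.Adj x u then (g x - gu) ^ 2 else 0) := by
      intro x hx
      by_cases hadj2 : G.Adj x u
      · rw [if_pos hadj2, ← Finset.add_sum_erase _ _
          (by rwa [SimpleGraph.mem_neighborFinset] : u ∈ G.neighborFinset x), hg_u]
        ring
      · rw [if_neg hadj2, Finset.erase_eq_of_notMem
          (by rwa [SimpleGraph.mem_neighborFinset]), add_zero]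
    have h_main : ∑ x ∈ Finset.univ.erase u, ∑ y ∈ (G.neighborFinset x).erase u,
        (g x - g y) ^ 2 = en H f := by
      rw [en]
      symm
      refine Finset.sum_bij (fun (b : {v : V // v ∈ {v : V | v ≠ u}}) _ => b.1) ?_ ?_ ?_ ?_
      · intro b _
        rw [Finset.mem_erase]
        exact ⟨b.2, Finset.mem_univ _⟩
      · intro b _ d _ h; exact Subtype.ext h
      · intro x hx
        rw [Finset.mem_erase] at hx
        exact ⟨⟨x, mem_S hx.1⟩, Finset.mem_univ _, rfl⟩
      · intro b _
        rw [← helper_nbr (G := G) b (fun y => (g b.1 - g y) ^ 2)]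
        refine Finset.sum_congr rfl fun d _ => ?_
        rw [hg_sub b, hg_sub d]
    have h_ite : ∑ x ∈ Finset.univ.erase u, (if G.Adj x u then (g x - gu) ^ 2 else 0)
        = L ^ 2 := by
      rw [Finset.sum_eq_single_of_mem v₀ (by rw [Finset.mem_erase]; exact ⟨hv₀u, Finset.mem_univ _⟩)]
      · rw [if_pos hadj.symm, hg_v₀, hgu]; ring
      · intro x _ hxv₀
        rw [if_neg (fun h => hxv₀ (huniq x h.symm))]
    rw [hsplit, h_u, Finset.sum_congr rfl h_rest, Finset.sum_add_distrib, h_main, h_ite]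
    ring
  -- apply the spectral lemma to gbar
  have hgbarharm : ∀ x, x ∉ bdry G → lap G gbar x = 0 := by
    intro x hx
    rw [hgbar, lap_shift, hgharm x hx]
  have hQbarpos : 0 < ∑ x ∈ bdry G, gbar x ^ 2 := by
    rw [hQbar]
    rcases hχ01 with h0 | h1
    · have hsa : s = gu := by rw [hsdef, h0]; ring
      rw [hsa, h0]
      have := arithA QH gu m hQH hm1
      linarith
    · have hLv : L = lam * a := by rw [hLval, h1]; ring
      have hgu2 : gu = a + lam * a := by rw [hgu, hLv]
      have hsa : s = lam * a := by rw [hsdef, hgu2, h1]; ring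
      rw [hsa, hgu2, h1]
      have := arithB QH a lam m hQH hm1 hlam
      linarith
  obtain ⟨mu, h, hmupos, heig, hbound⟩ := exists_eig_le hconn hBG gbar hgbarharm hmean
    (ne_of_gt hQbarpos)
  have hen_gbar : en G gbar = en G g := by rw [hgbar, en_shift]
  have hfen : en H f / 2 = lam * QH := eig_en hfeig
  refine ⟨mu, hmupos, ⟨h, heig⟩, ?_⟩
  have hrhs : en G gbar / 2 = lam * QH + L ^ 2 := by
    rw [hen_gbar, hen_g]
    rw [← hfen]; ring
  rw [hrhs] at hbound
  have hfinal : lam * QH + L ^ 2 ≤ lam * ∑ x ∈ bdry G, gbar x ^ 2 := by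
    rw [hQbar]
    rcases hχ01 with h0 | h1
    · have hL0 : L = 0 := by rw [hLval, h0]; ring
      have hsa : s = gu := by rw [hsdef, h0]; ring
      rw [hL0, hsa, h0]
      linarith [arithC QH gu lam m hQH hm1 hlam]
    · have hLv : L = lam * a := by rw [hLval, h1]; ring
      have hgu2 : gu = a + lam * a := by rw [hgu, hLv]
      have hsa : s = lam * a := by rw [hsdef, hgu2, h1]; ring
      rw [hLv, hsa, hgu2, h1]
      linarith [arithD QH a lam m hQH hm1 hlam]
  have hml := le_trans hbound hfinal
  exact le_of_mul_le_mul_right hml hQbarpos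
end Pendant3

section Trees
variable {G : SimpleGraph V}

lemma degree_pos (hconn : G.Preconnected) (hcard : 2 ≤ Fintype.card V) (v : V) :
    0 < G.degree v := by
  rw [SimpleGraph.degree_pos_iff_exists_adj]
  obtain ⟨w, hw⟩ := Fintype.exists_ne_of_one_lt_card (by omega) v
  obtain ⟨p⟩ := hconn v w
  cases p with
  | nil => exact absurd rfl hw
  | cons h p => exact ⟨_, h⟩

lemma exists_two_leaves (hT : G.IsTree) (hcard : 2 ≤ Fintype.card V) :
    ∃ x y, x ≠ y ∧ x ∈ bdry G ∧ y ∈ bdry G := by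
  classical
  have hedge : G.edgeFinset.card + 1 = Fintype.card V := hT.card_edgeFinset
  have hsum : ∑ v, G.degree v = 2 * G.edgeFinset.card :=
    SimpleGraph.sum_degrees_eq_twice_card_edges G
  have hdeg : ∀ v, 1 ≤ G.degree v := fun v =>
    degree_pos hT.isConnected.preconnected hcard v
  have hsplit : ∑ v, G.degree v
      = (∑ v ∈ bdry G, G.degree v) + ∑ v ∈ (bdry G)ᶜ, G.degree v :=
    (Finset.sum_add_sum_compl _ _).symm
  have h1 : ∑ v ∈ bdry G, G.degree v = (bdry G).card := by
    rw [Finset.sum_congr rfl (fun v hv => degree_eq_one_iff_mem_bdry.mp hv)]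
    simp
  have h3 : 2 * ((bdry G)ᶜ.card) ≤ ∑ v ∈ (bdry G)ᶜ, G.degree v := by
    rw [show 2 * ((bdry G)ᶜ.card) = ∑ _v ∈ (bdry G)ᶜ, 2 by
      rw [Finset.sum_const, smul_eq_mul, mul_comm]]
    refine Finset.sum_le_sum fun v hv => ?_
    have hne : G.degree v ≠ 1 := by
      have := Finset.mem_compl.mp hv
      rwa [degree_eq_one_iff_mem_bdry] at this
    have := hdeg v
    omega
  have hcompl : (bdry G)ᶜ.card = Fintype.card V - (bdry G).card :=
    Finset.card_compl (bdry G)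
  have hble : (bdry G).card ≤ Fintype.card V := Finset.card_le_univ _
  have hkey : 1 < (bdry G).card := by omega
  obtain ⟨x, hx, y, hy, hxy⟩ := Finset.one_lt_card.mp hkey
  exact ⟨x, y, hxy, hx, hy⟩

/-- A tree with at least two vertices has a positive Steklov eigenvalue. -/
lemma eigset_nonempty (hT : G.IsTree) (hcard : 2 ≤ Fintype.card V) :
    ∃ lam, 0 < lam ∧ ∃ f, IsEigenpair G lam f := by
  classical
  obtain ⟨x, y, hxy, hx, hy⟩ := exists_two_leaves hT hcard
  have hconn := hT.isConnected.preconnected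
  have hB : (bdry G).Nonempty := ⟨x, hx⟩
  set b : {v : V // v ∈ bdry G} → ℝ :=
    fun i => (if i.1 = x then 1 else 0) - (if i.1 = y then 1 else 0) with hb
  set g := harmExt hconn hB b with hg
  have hgb : ∀ w ∈ bdry G, g w = (if w = x then (1:ℝ) else 0) - (if w = y then 1 else 0) :=
    fun w hw => harmExt_bdry hconn hB b w hw
  have hmean : ∑ w ∈ bdry G, g w = 0 := by
    rw [Finset.sum_congr rfl hgb, Finset.sum_sub_distrib,
      Finset.sum_ite_eq' (bdry G) x (fun _ => (1:ℝ)),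
      Finset.sum_ite_eq' (bdry G) y (fun _ => (1:ℝ)), if_pos hx, if_pos hy, sub_self]
  have hQ : ∑ w ∈ bdry G, g w ^ 2 = 2 := by
    have hterm : ∀ w ∈ bdry G, g w ^ 2
        = (if w = x then (1:ℝ) else 0) + (if w = y then 1 else 0) := by
      intro w hw
      rw [hgb w hw]
      by_cases h1 : w = x
      · have h2 : w ≠ y := fun h => hxy (h1 ▸ h ▸ rfl)
        rw [if_pos h1, if_neg h2]; ring
      · by_cases h2 : w = y
        · rw [if_neg h1, if_pos h2]; ring
        · rw [if_neg h1, if_neg h2]; ring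
    rw [Finset.sum_congr rfl hterm, Finset.sum_add_distrib,
      Finset.sum_ite_eq' (bdry G) x (fun _ => (1:ℝ)),
      Finset.sum_ite_eq' (bdry G) y (fun _ => (1:ℝ)), if_pos hx, if_pos hy]
    norm_num
  obtain ⟨lam, f, hpos, heig, _⟩ := exists_eig_le hconn hB g
    (harmExt_harm hconn hB b) hmean (by rw [hQ]; norm_num)
  exact ⟨lam, hpos, f, heig⟩

/-- Comparison of `lambda2` via eigenvalue sets. -/
lemma lambda2_le {V₁ V₂ : Type} [Fintype V₁] [DecidableEq V₁] [Fintype V₂] [DecidableEq V₂]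
    (G₁ : SimpleGraph V₁) (G₂ : SimpleGraph V₂)
    (hne : ∃ lam : ℝ, 0 < lam ∧ ∃ f, IsEigenpair G₁ lam f)
    (hstep : ∀ lam : ℝ, (0 < lam ∧ ∃ f, IsEigenpair G₁ lam f) →
      ∃ mu, 0 < mu ∧ (∃ h, IsEigenpair G₂ mu h) ∧ mu ≤ lam) :
    lambda2 G₂ ≤ lambda2 G₁ := by
  rw [lambda2, lambda2]
  refine le_csInf hne ?_
  intro lam hlam
  obtain ⟨mu, hmu1, hmu2, hle⟩ := hstep lam hlam
  exact le_trans (csInf_le ⟨0, fun z hz => hz.1.le⟩ ⟨hmu1, hmu2⟩) hle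

end Trees

section IsoTransfer
variable {V' : Type} [Fintype V'] [DecidableEq V'] {G : SimpleGraph V} {G' : SimpleGraph V'}

lemma degree_map (e : G ≃g G') (v : V) : G'.degree (e v) = G.degree v := by
  rw [SimpleGraph.degree, SimpleGraph.degree]
  symm
  refine Finset.card_bij (fun y _ => e y) ?_ ?_ ?_
  · intro y hy
    rw [SimpleGraph.mem_neighborFinset] at hy ⊢
    exact e.map_adj_iff.mpr hy
  · intro y _ z _ h
    exact e.injective h
  · intro y' hy'
    rw [SimpleGraph.mem_neighborFinset] at hy'
    refine ⟨e.symm y', ?_, by simp⟩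
    rw [SimpleGraph.mem_neighborFinset]
    have : G'.Adj (e v) (e (e.symm y')) := by simpa using hy'
    exact e.map_adj_iff.mp this

lemma bdry_map (e : G ≃g G') (v : V) : e v ∈ bdry G' ↔ v ∈ bdry G := by
  rw [degree_eq_one_iff_mem_bdry, degree_eq_one_iff_mem_bdry, degree_map]

lemma lap_map (e : G ≃g G') (f' : V' → ℝ) (v : V) :
    lap G' f' (e v) = lap G (fun w => f' (e w)) v := by
  rw [lap, lap]
  symm
  refine Finset.sum_bij (fun y _ => e y) ?_ ?_ ?_ ?_
  · intro y hy
    rw [SimpleGraph.mem_neighborFinset] at hy ⊢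
    exact e.map_adj_iff.mpr hy
  · intro y _ z _ h
    exact e.injective h
  · intro y' hy'
    rw [SimpleGraph.mem_neighborFinset] at hy'
    refine ⟨e.symm y', ?_, by simp⟩
    rw [SimpleGraph.mem_neighborFinset]
    have : G'.Adj (e v) (e (e.symm y')) := by simpa using hy'
    exact e.map_adj_iff.mp this
  · intro y _; rfl

lemma eigenpair_map (e : G ≃g G') {lam : ℝ} {f' : V' → ℝ} (hf : IsEigenpair G' lam f') :
    IsEigenpair G lam (fun w => f' (e w)) := by
  obtain ⟨hne, hint, hbd⟩ := hf
  refine ⟨?_, ?_, ?_⟩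
  · intro h0
    apply hne
    funext v'
    have := congrFun h0 (e.symm v')
    simpa using this
  · intro v hv
    rw [← lap_map e f' v]
    refine hint (e v) ?_
    rw [bdry_map e v]
    exact hv
  · intro v hv
    rw [← lap_map e f' v]
    exact hbd (e v) ((bdry_map e v).mpr hv)

lemma lambda2_iso (e : G ≃g G') : lambda2 G = lambda2 G' := by
  rw [lambda2, lambda2]
  congr 1
  ext lam
  simp only [Set.mem_setOf_eq]
  constructor
  · rintro ⟨hpos, f, hf⟩
    exact ⟨hpos, fun w => f (e.symm w), eigenpair_map e.symm hf⟩
  · rintro ⟨hpos, f', hf'⟩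
    exact ⟨hpos, fun w => f' (e w), eigenpair_map e hf'⟩
end IsoTransfer

section Induction
variable {G : SimpleGraph V}

lemma walk_crossing {S : Set V} {a b : V} (p : G.Walk a b) :
    a ∈ S → b ∉ S → ∃ x y, x ∈ S ∧ y ∉ S ∧ G.Adj x y := by
  induction p with
  | nil => intro ha hb; exact absurd ha hb
  | @cons u v w h q ih =>
    intro ha hb
    by_cases hv : v ∈ S
    · exact ih hv hb
    · exact ⟨u, v, ha, hv, h⟩

lemma induce_acyclic (hacyc : G.IsAcyclic) (S : Set V) : (G.induce S).IsAcyclic := by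
  intro v c hc
  have hinj : Function.Injective ((SimpleGraph.Embedding.induce (G := G) S).toHom) :=
    fun _ _ h => (SimpleGraph.Embedding.induce (G := G) S).injective h
  exact hacyc _ ((SimpleGraph.Walk.map_isCycle_iff_of_injective hinj).mpr hc)

lemma preconnected_iso {V' : Type} {G' : SimpleGraph V'} (e : G ≃g G')
    (h : G.Preconnected) : G'.Preconnected := by
  intro a b
  have := (h (e.symm a) (e.symm b)).map e.toHom
  simpa using this

lemma crossing_unique (hacyc : G.IsAcyclic) {S : Set V}
    (hSconn : (G.induce S).Preconnected)
    {w x₁ x₂ : V} (hx₁ : x₁ ∈ S) (hx₂ : x₂ ∈ S) (hw : w ∉ S)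
    (h1 : G.Adj w x₁) (h2 : G.Adj w x₂) : x₁ = x₂ := by
  by_contra hne
  obtain ⟨q⟩ := hSconn ⟨x₁, hx₁⟩ ⟨x₂, hx₂⟩
  set p0 : G.Walk x₁ x₂ := q.map (SimpleGraph.Embedding.induce (G := G) S).toHom with hp0
  set p : G.Path x₁ x₂ := p0.toPath with hp
  have hsupp : ∀ z ∈ (p : G.Walk x₁ x₂).support, z ∈ S := by
    intro z hz
    have hz0 : z ∈ p0.support := SimpleGraph.Walk.support_toPath_subset p0 hz
    replace hz0 : z ∈ (q.map (SimpleGraph.Embedding.induce (G := G) S).toHom).support := hz0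
    rw [SimpleGraph.Walk.support_map, List.mem_map] at hz0
    obtain ⟨z', _, rfl⟩ := hz0
    exact z'.2
  have hwp : w ∉ (p : G.Walk x₁ x₂).support := fun h => hw (hsupp w h)
  have hP2 : (SimpleGraph.Walk.cons h1 (p : G.Walk x₁ x₂)).IsPath :=
    (SimpleGraph.Walk.cons_isPath_iff h1 _).mpr ⟨p.2, hwp⟩
  have hq := SimpleGraph.isAcyclic_iff_path_unique.mp hacyc
    (SimpleGraph.Path.singleton h2) ⟨_, hP2⟩
  have hlen := congrArg (fun r : G.Path w x₂ => (r : G.Walk w x₂).length) hq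
  simp only [SimpleGraph.Path.singleton, SimpleGraph.Walk.length_cons,
    SimpleGraph.Walk.length_nil] at hlen
  have hplen : (p : G.Walk x₁ x₂).length = 0 := by omega
  exact hne (SimpleGraph.Walk.eq_of_length_eq_zero hplen)

/-- A homomorphism from a path graph reflection: in a tree ambient graph, the image of
non-adjacent vertices under an injective homomorphism from a connected graph stays
non-adjacent. -/
lemma adj_reflect {V₁ : Type} {G₁ : SimpleGraph V₁} (h₁conn : G₁.Preconnected)
    (hacyc : G.IsAcyclic) (φ : G₁ →g G) (hφ : Function.Injective φ)
    {a b : V₁} (hadj : G.Adj (φ a) (φ b)) : G₁.Adj a b := by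
  by_contra hnadj
  have hab : a ≠ b := fun h => (h ▸ hadj).ne rfl
  obtain ⟨p0⟩ := h₁conn a b
  set p : G₁.Path a b := p0.toPath with hpdef
  have hlen2 : 2 ≤ (p : G₁.Walk a b).length := by
    rcases hl : (p : G₁.Walk a b).length with _ | n
    · exact absurd (SimpleGraph.Walk.eq_of_length_eq_zero hl) hab
    · rcases n with _ | n
      · -- length 1 walk: endpoints adjacent
        exfalso
        apply hnadj
        cases hw : (p : G₁.Walk a b) with
        | nil => rw [hw] at hl; simp at hl
        | cons h q' =>
          rw [hw] at hl
          simp only [SimpleGraph.Walk.length_cons, Nat.succ.injEq] at hl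
          have := SimpleGraph.Walk.eq_of_length_eq_zero hl
          exact this ▸ h
      · omega
  -- map the path to G
  have hqpath : ((p : G₁.Walk a b).map φ).IsPath :=
    SimpleGraph.Walk.map_isPath_of_injective hφ p.2
  have hqrev : (((p : G₁.Walk a b).map φ).reverse).IsPath := hqpath.reverse
  have hq := SimpleGraph.isAcyclic_iff_path_unique.mp hacyc
    (SimpleGraph.Path.singleton hadj.symm) ⟨_, hqrev⟩
  have hlen := congrArg (fun r : G.Path (φ b) (φ a) => (r : G.Walk (φ b) (φ a)).length) hq
  simp only [SimpleGraph.Path.singleton, SimpleGraph.Walk.length_cons,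
    SimpleGraph.Walk.length_nil, SimpleGraph.Walk.length_reverse,
    SimpleGraph.Walk.length_map] at hlen
  omega
end Induction

section Step
variable {G : SimpleGraph V}

set_option maxHeartbeats 1000000 in
lemma step_lemma (hT : G.IsTree) (S : Finset V)
    (hS : (G.induce (↑S : Set V)).IsTree) (hc2 : 2 ≤ S.card)
    {x y : V} (hx : x ∈ S) (hy : y ∉ S) (hadj : G.Adj x y) :
    (G.induce (↑(insert y S) : Set V)).IsTree ∧
      lambda2 (G.induce (↑(insert y S) : Set V)) ≤ lambda2 (G.induce (↑S : Set V)) := by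
  classical
  set S' : Finset V := insert y S with hS'def
  have hsub : (↑S : Set V) ⊆ (↑S' : Set V) := by
    intro v hv
    rw [hS'def, Finset.coe_insert]
    exact Set.mem_insert_of_mem _ hv
  have hymem : y ∈ (↑S' : Set V) := by
    rw [hS'def, Finset.coe_insert]
    exact Set.mem_insert _ _
  have hxmem : x ∈ (↑S' : Set V) := hsub hx
  set u : ↥(↑S' : Set V) := ⟨y, hymem⟩ with hu_def
  set xS' : ↥(↑S' : Set V) := ⟨x, hxmem⟩ with hxS'def
  have hacyc' : (G.induce (↑S' : Set V)).IsAcyclic := induce_acyclic hT.2 _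
  -- membership in S' means y or in S
  have hmem' : ∀ c : ↥(↑S' : Set V), c.1 = y ∨ c.1 ∈ (↑S : Set V) := by
    intro c
    rcases Finset.mem_insert.mp (Finset.mem_coe.mp c.2) with h | h
    · exact Or.inl h
    · exact Or.inr (Finset.mem_coe.mpr h)
  -- preconnectedness of the induced graph on S'
  have hreach : ∀ c : ↥(↑S' : Set V), (G.induce (↑S' : Set V)).Reachable c xS' := by
    intro c
    rcases hmem' c with hc | hc
    · have hadj' : (G.induce (↑S' : Set V)).Adj c xS' := by
        show G.Adj c.1 x
        rw [hc]
        exact hadj.symm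
      exact hadj'.reachable
    · have hr := hS.isConnected.preconnected ⟨c.1, hc⟩ ⟨x, hx⟩
      have hr2 := hr.map (G.induceHomOfLE hsub).toHom
      have he1 : (G.induceHomOfLE hsub).toHom ⟨c.1, hc⟩ = c := Subtype.ext rfl
      have he2 : (G.induceHomOfLE hsub).toHom ⟨x, hx⟩ = xS' := Subtype.ext rfl
      rwa [he1, he2] at hr2
  have hpre : (G.induce (↑S' : Set V)).Preconnected :=
    fun a b => (hreach a).trans (hreach b).symm
  have hconn' : (G.induce (↑S' : Set V)).Connected := by
    have : Nonempty ↥(↑S' : Set V) := ⟨u⟩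
    exact ⟨hpre⟩
  have htree' : (G.induce (↑S' : Set V)).IsTree := ⟨hconn', hacyc'⟩
  -- u is a leaf of the induced graph on S'
  have huniqnb : ∀ z : ↥(↑S' : Set V), (G.induce (↑S' : Set V)).Adj u z → z = xS' := by
    intro z hz
    have hadjyz : G.Adj y z.1 := hz
    have hzy : z.1 ≠ y := fun h => (h ▸ hadjyz).ne' rfl
    have hzS : z.1 ∈ (↑S : Set V) := (hmem' z).resolve_left hzy
    have := crossing_unique hT.2 hS.isConnected.preconnected hzS
      (by exact hx : x ∈ (↑S : Set V)) (by simpa using hy) hadjyz hadj.symm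
    exact Subtype.ext this
  have hNu : (G.induce (↑S' : Set V)).neighborFinset u = {xS'} := by
    apply Finset.eq_singleton_iff_unique_mem.mpr
    constructor
    · rw [SimpleGraph.mem_neighborFinset]
      exact (hadj.symm : G.Adj y x)
    · intro z hz
      rw [SimpleGraph.mem_neighborFinset] at hz
      exact huniqnb z hz
  have hudeg : (G.induce (↑S' : Set V)).degree u = 1 := by
    rw [SimpleGraph.degree, hNu, Finset.card_singleton]
  -- cardinality
  have hcS : Fintype.card ↥(↑S : Set V) = S.card := by
    rw [← Fintype.card_coe S]
    exact Fintype.card_congr (Equiv.subtypeEquivRight (fun v => Finset.mem_coe))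
  have hc2' : 2 ≤ Fintype.card ↥(↑S : Set V) := by rw [hcS]; exact hc2
  have hScard : Fintype.card ↥(↑S' : Set V) = S'.card := by
    rw [← Fintype.card_coe S']
    exact Fintype.card_congr (Equiv.subtypeEquivRight (fun v => Finset.mem_coe))
  have hc3 : 3 ≤ Fintype.card ↥(↑S' : Set V) := by
    rw [hScard, hS'def, Finset.card_insert_of_notMem hy]
    omega
  -- the iso between the induced graph on S and the pendant-removed graph
  set ψ : (G.induce (↑S : Set V)) ≃g
      ((G.induce (↑S' : Set V)).induce {v : ↥(↑S' : Set V) | v ≠ u}) :=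
    { toFun := fun a => ⟨⟨a.1, hsub a.2⟩, by
        intro h
        have hay : a.1 = y := congrArg Subtype.val h
        exact hy (hay ▸ Finset.mem_coe.mp a.2) ⟩,
      invFun := fun b => ⟨b.1.1, by
        have hbne : b.1.1 ≠ y := fun h => b.2 (Subtype.ext h)
        exact (hmem' b.1).resolve_left hbne⟩,
      left_inv := fun a => Subtype.ext rfl,
      right_inv := fun b => Subtype.ext (Subtype.ext rfl),
      map_rel_iff' := Iff.rfl } with hψdef
  refine ⟨htree', ?_⟩
  -- compare lambda2 via the pendant lemma
  refine lambda2_le _ _ (eigset_nonempty hS hc2') ?_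
  intro lam hlam
  obtain ⟨hpos, f, heigf⟩ := hlam
  have heig' : IsEigenpair ((G.induce (↑S' : Set V)).induce {v : ↥(↑S' : Set V) | v ≠ u})
      lam (fun w => f (ψ.symm w)) := eigenpair_map ψ.symm heigf
  have hHconn : ((G.induce (↑S' : Set V)).induce {v : ↥(↑S' : Set V) | v ≠ u}).Preconnected :=
    preconnected_iso ψ hS.isConnected.preconnected
  have hBH : (bdry ((G.induce (↑S' : Set V)).induce {v : ↥(↑S' : Set V) | v ≠ u})).Nonempty := by
    obtain ⟨z, w, hzw, hz, hw⟩ := exists_two_leaves hS hc2'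
    exact ⟨ψ z, (bdry_map ψ z).mpr hz⟩
  exact pendant_le hpre hc3 hudeg hHconn hBH hpos heig'
end Step

section Main
variable {G : SimpleGraph V}

lemma down_induction (hT : G.IsTree) :
    ∀ (k : ℕ) (S : Finset V), Fintype.card V - S.card = k →
      (G.induce (↑S : Set V)).IsTree → 2 ≤ S.card →
      lambda2 G ≤ lambda2 (G.induce (↑S : Set V)) := by
  intro k
  induction k using Nat.strong_induction_on with
  | _ k ih =>
    intro S hk hS hc2
    by_cases huniv : S = Finset.univ
    · subst huniv
      have h1 : lambda2 (G.induce (↑(Finset.univ : Finset V) : Set V)) = lambda2 G := by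
        refine lambda2_iso ?_
        exact { toFun := fun a => a.1,
                invFun := fun v => ⟨v, by simp⟩,
                left_inv := fun a => Subtype.ext rfl,
                right_inv := fun v => rfl,
                map_rel_iff' := Iff.rfl }
      rw [h1]
    · have hSne : S.Nonempty := Finset.card_pos.mp (by omega)
      obtain ⟨s₀, hs₀⟩ := hSne
      obtain ⟨t₀, ht₀⟩ : ∃ t, t ∉ S := by
        by_contra hno
        push_neg at hno
        exact huniv (Finset.eq_univ_iff_forall.mpr hno)
      obtain ⟨p⟩ := hT.isConnected.preconnected s₀ t₀
      obtain ⟨x, y, hx, hy, hadj⟩ := walk_crossing (S := (↑S : Set V)) p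
        (Finset.mem_coe.mpr hs₀) (fun h => ht₀ (Finset.mem_coe.mp h))
      have hxS : x ∈ S := Finset.mem_coe.mp hx
      have hyS : y ∉ S := fun h => hy (Finset.mem_coe.mpr h)
      obtain ⟨htree', hle⟩ := step_lemma hT S hS hc2 hxS hyS hadj
      have hcardlt : S.card < Fintype.card V := by
        have := Finset.card_lt_card (Finset.ssubset_univ_iff.mpr huniv)
        rwa [Finset.card_univ] at this
      have hk' : Fintype.card V - (insert y S).card < k := by
        rw [Finset.card_insert_of_notMem hyS]
        omega
      have hrec := ih _ hk' (insert y S) rfl htree'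
        (by rw [Finset.card_insert_of_notMem hyS]; omega)
      exact le_trans hrec hle
end Main

/-- Monotonicity of the first nonzero Steklov eigenvalue on trees:
if the finite tree `G₁` is a subgraph of the finite tree `G₂` (i.e. there is an injective
graph homomorphism `G₁ →g G₂`), then `λ₂(G₂) ≤ λ₂(G₁)`. -/
theorem lambda2_monotone {V₁ V₂ : Type} [Fintype V₁] [DecidableEq V₁]
    [Fintype V₂] [DecidableEq V₂] (G₁ : SimpleGraph V₁) (G₂ : SimpleGraph V₂)
    (h₁ : G₁.IsTree) (h₂ : G₂.IsTree)
    (hc₁ : 2 ≤ Fintype.card V₁) (hc₂ : 2 ≤ Fintype.card V₂)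
    (φ : G₁ →g G₂) (hφ : Function.Injective φ) :
    lambda2 G₂ ≤ lambda2 G₁ := by
  classical
  set S₀ : Finset V₂ := Finset.univ.image φ with hS₀
  have hmem : ∀ a, φ a ∈ S₀ := fun a => Finset.mem_image.mpr ⟨a, Finset.mem_univ a, rfl⟩
  have hadj_reflect : ∀ a b : V₁, G₂.Adj (φ a) (φ b) → G₁.Adj a b :=
    fun a b h => adj_reflect h₁.isConnected.preconnected h₂.2 φ hφ h
  have hbij : Function.Bijective
      (fun a => (⟨φ a, Finset.mem_coe.mpr (hmem a)⟩ : ↥(↑S₀ : Set V₂))) := by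
    constructor
    · intro a b h
      exact hφ (congrArg Subtype.val h)
    · intro b
      obtain ⟨a, _, ha⟩ := Finset.mem_image.mp (Finset.mem_coe.mp b.2)
      exact ⟨a, Subtype.ext ha⟩
  set e : G₁ ≃g (G₂.induce (↑S₀ : Set V₂)) :=
    { Equiv.ofBijective _ hbij with
      map_rel_iff' := by
        intro a b
        constructor
        · intro h
          exact hadj_reflect a b h
        · intro h
          exact φ.map_adj h } with hedef
  have hnV₁ : Nonempty V₁ := Fintype.card_pos_iff.mp (by omega)
  have htreeS₀ : (G₂.induce (↑S₀ : Set V₂)).IsTree := by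
    constructor
    · have hpre := preconnected_iso e h₁.isConnected.preconnected
      have : Nonempty ↥(↑S₀ : Set V₂) := ⟨e (Classical.arbitrary V₁)⟩
      exact ⟨hpre⟩
    · exact induce_acyclic h₂.2 _
  have hcardS₀ : 2 ≤ S₀.card := by
    rw [hS₀, Finset.card_image_of_injective _ hφ, Finset.card_univ]
    exact hc₁
  have hmain := down_induction h₂ (Fintype.card V₂ - S₀.card) S₀ rfl htreeS₀ hcardS₀
  exact hmain.trans (le_of_eq (lambda2_iso e).symm)
end Steklov
end

section
/- Let G be a finite tree with boundary δG containing x, let f be a λ-flow to x on G with λ≥0, and let (u,v) be an edge of G with d(x,u)>d(x,v), where d denotes the graph distance. Let H be the branch from (u,v). Then f(u)−f(v) = λ · Σ_{z∈δH(u,v)∖{v}} f(z), where δH(u,v) denotes the set of degree-one vertices of the subtree H(u,v). -/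
open Finset

attribute [local instance] Classical.propDecidable

namespace Steklov

variable {V : Type} [Fintype V] [DecidableEq V]

section Helpers

variable {G : SimpleGraph V} {u v : V}

lemma u_mem_branchSet : u ∈ branchSet G u v := SimpleGraph.Reachable.refl u

lemma v_not_mem_branchSet (hG : G.IsTree) (huv : G.Adj u v) : v ∉ branchSet G u v := by
  have hb : G.IsBridge s(u, v) :=
    SimpleGraph.isAcyclic_iff_forall_adj_isBridge.mp hG.2 huv
  rw [SimpleGraph.isBridge_iff] at hb
  exact fun h => hb h

lemma branchSet_adj (hG : G.IsTree) (huv : G.Adj u v) {w y : V}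
    (hw : w ∈ branchSet G u v) (hadj : G.Adj w y) (hyv : y ≠ v) :
    y ∈ branchSet G u v := by
  have hwv : w ≠ v := fun h => v_not_mem_branchSet hG huv (h ▸ hw)
  refine hw.trans (SimpleGraph.Adj.reachable ?_)
  rw [SimpleGraph.deleteEdges_adj]
  refine ⟨hadj, ?_⟩
  simp only [Set.mem_singleton_iff, Sym2.eq_iff]
  rintro (⟨rfl, rfl⟩ | ⟨rfl, rfl⟩)
  · exact hyv rfl
  · exact hwv rfl

lemma branchSet_adj_v (hG : G.IsTree) (huv : G.Adj u v) {w : V}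
    (hw : w ∈ branchSet G u v) (hadj : G.Adj w v) : w = u := by
  by_contra hne
  have hwv : w ≠ v := fun h => v_not_mem_branchSet hG huv (h ▸ hw)
  have : v ∈ branchSet G u v := by
    refine hw.trans (SimpleGraph.Adj.reachable ?_)
    rw [SimpleGraph.deleteEdges_adj]
    refine ⟨hadj, ?_⟩
    simp only [Set.mem_singleton_iff, Sym2.eq_iff]
    rintro (⟨rfl, -⟩ | ⟨rfl, -⟩)
    · exact hne rfl
    · exact hwv rfl
  exact v_not_mem_branchSet hG huv this

lemma x_not_mem_branchSet (hG : G.IsTree) (huv : G.Adj u v) {x : V}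
    (hd : G.dist x v < G.dist x u) : x ∉ branchSet G u v := by
  intro hx
  obtain ⟨q, hq⟩ := hG.1.exists_walk_length_eq_dist x v
  by_cases he : s(u, v) ∈ q.edges
  · have hu : u ∈ q.support := q.fst_mem_support_of_mem_edges he
    have h1 : G.dist x u ≤ (q.takeUntil u hu).length := SimpleGraph.dist_le _
    have h2 : 1 ≤ (q.dropUntil u hu).length :=
      Nat.one_le_iff_ne_zero.mpr
        (fun h0 => huv.ne (SimpleGraph.Walk.eq_of_length_eq_zero h0))
    have h3 : (q.takeUntil u hu).length + (q.dropUntil u hu).length = q.length := by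
      have := congr_arg SimpleGraph.Walk.length (q.take_spec hu)
      rwa [SimpleGraph.Walk.length_append] at this
    omega
  · have hr : (G.deleteEdges {s(u, v)}).Reachable x v := by
      refine SimpleGraph.Walk.reachable (q.toDeleteEdges {s(u, v)} ?_)
      intro e heq
      simp only [Set.mem_singleton_iff]
      rintro rfl
      exact he heq
    exact v_not_mem_branchSet hG huv (hx.trans hr)

lemma branchSet_nbhd (hG : G.IsTree) (huv : G.Adj u v) {w y : V}
    (hw : w ∈ branchSet G u v) (hadj : G.Adj w y) : y ∈ branchClosed G u v := by
  by_cases hyv : y = v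
  · exact hyv ▸ Set.mem_insert _ _
  · exact Set.mem_insert_of_mem _ (branchSet_adj hG huv hw hadj hyv)

lemma degree_branch_eq (hG : G.IsTree) (huv : G.Adj u v) {w : V}
    (hw : w ∈ branchSet G u v) :
    (G.induce (branchClosed G u v)).degree ⟨w, Set.mem_insert_of_mem _ hw⟩
      = G.degree w := by
  classical
  unfold SimpleGraph.degree
  refine Finset.card_bij' (fun z _ => z.1) (fun y hy => ⟨y, ?_⟩) ?_ ?_ ?_ ?_
  · exact branchSet_nbhd hG huv hw ((SimpleGraph.mem_neighborFinset _ _ _).mp hy)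
  · intro z hz
    rw [SimpleGraph.mem_neighborFinset] at hz ⊢
    exact hz
  · intro y hy
    rw [SimpleGraph.mem_neighborFinset] at hy ⊢
    exact hy
  · intro z _; rfl
  · intro y _; rfl

end Helpers

/-- For a `lam`-flow `f` to `x ∈ δG` and an edge `(u,v)` with
`d(x,u) > d(x,v)`, one has `f u - f v = lam · Σ_{z ∈ δH(u,v) ∖ {v}} f z`, where `H` is
the branch from `(u,v)` and `δH(u,v)` is the set of degree-one vertices of `H(u,v)`. -/
theorem edge_flow (G : SimpleGraph V) (hG : G.IsTree) (hcard : 2 ≤ Fintype.card V)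
    (x : V) (hx : x ∈ bdry G) (lam : ℝ) (hlam : 0 ≤ lam) (f : V → ℝ)
    (hf : IsFlow G lam x f) (u v : V) (huv : G.Adj u v)
    (hd : G.dist x v < G.dist x u) :
    f u - f v =
      lam * ∑ z ∈ (bdry (G.induce (branchClosed G u v))).erase
        ⟨v, Set.mem_insert _ _⟩, f z.1 := by
  classical
  have mem_bdry : ∀ (H : SimpleGraph V) (w : V), w ∈ bdry H ↔ H.degree w = 1 := by
    intro H w; simp [bdry]
  set S : Finset V := Finset.univ.filter (fun w => w ∈ branchSet G u v) with hS
  have hmemS : ∀ w, w ∈ S ↔ w ∈ branchSet G u v := by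
    intro w; simp [hS]
  have huS : u ∈ S := (hmemS u).mpr u_mem_branchSet
  have hvS : v ∉ S := fun h => v_not_mem_branchSet hG huv ((hmemS v).mp h)
  have hxS : x ∉ S := fun h => x_not_mem_branchSet hG huv hd ((hmemS x).mp h)
  -- Step 1: the sum of the Laplacian over the branch telescopes to `f u - f v`.
  have key1 : ∑ w ∈ S, lap G f w = f u - f v := by
    have split : ∀ w ∈ S, lap G f w =
        (∑ y ∈ (G.neighborFinset w).filter (fun y => y ∈ S), (f w - f y)) +
        (∑ y ∈ (G.neighborFinset w).filter (fun y => y ∉ S), (f w - f y)) := by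
      intro w _
      rw [lap, ← Finset.sum_filter_add_sum_filter_not (G.neighborFinset w) (fun y => y ∈ S)]
    rw [Finset.sum_congr rfl split, Finset.sum_add_distrib]
    have hA : ∑ w ∈ S, ∑ y ∈ (G.neighborFinset w).filter (fun y => y ∈ S),
        (f w - f y) = 0 := by
      have hrw : ∀ w ∈ S, ∑ y ∈ (G.neighborFinset w).filter (fun y => y ∈ S), (f w - f y)
          = ∑ y ∈ S, if G.Adj w y then f w - f y else 0 := by
        intro w _
        rw [← Finset.sum_filter]
        apply Finset.sum_congr _ (fun _ _ => rfl)
        ext y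
        simp only [Finset.mem_filter, SimpleGraph.mem_neighborFinset]
        tauto
      rw [Finset.sum_congr rfl hrw]
      have hswap : ∑ w ∈ S, ∑ y ∈ S, (if G.Adj w y then f w - f y else 0)
          = - ∑ w ∈ S, ∑ y ∈ S, (if G.Adj w y then f w - f y else 0) := by
        nth_rewrite 1 [Finset.sum_comm]
        rw [← Finset.sum_neg_distrib]
        apply Finset.sum_congr rfl
        intro w _
        rw [← Finset.sum_neg_distrib]
        apply Finset.sum_congr rfl
        intro y _
        by_cases h : G.Adj w y
        · simp [h, h.symm]
        · rw [if_neg h, if_neg (fun h' : G.Adj y w => h h'.symm), neg_zero]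
      linarith
    rw [hA, zero_add]
    have hfil : ∀ w ∈ S, (G.neighborFinset w).filter (fun y => y ∉ S)
        = if w = u then {v} else ∅ := by
      intro w hw
      have hw' := (hmemS w).mp hw
      ext y
      simp only [Finset.mem_filter, SimpleGraph.mem_neighborFinset]
      constructor
      · rintro ⟨hadj, hyS⟩
        have hyv : y = v := by
          by_contra hne
          exact hyS ((hmemS y).mpr (branchSet_adj hG huv hw' hadj hne))
        subst hyv
        have : w = u := branchSet_adj_v hG huv hw' hadj
        simp [this]
      · intro hy
        by_cases hwu : w = u
        · rw [if_pos hwu, Finset.mem_singleton] at hy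
          subst hy
          refine ⟨?_, hvS⟩
          rw [hwu]
          exact huv
        · simp [hwu] at hy
    calc ∑ w ∈ S, ∑ y ∈ (G.neighborFinset w).filter (fun y => y ∉ S), (f w - f y)
        = ∑ w ∈ S, ∑ y ∈ (if w = u then ({v} : Finset V) else ∅), (f w - f y) :=
          Finset.sum_congr rfl (fun w hw => by rw [hfil w hw])
      _ = f u - f v := by
          rw [Finset.sum_eq_single_of_mem u huS]
          · simp
          · intro w _ hne
            simp [hne]
  -- Step 2: the sum of the Laplacian over the branch via the flow equations.
  have key2 : ∑ w ∈ S, lap G f w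
      = lam * ∑ w ∈ S.filter (fun w => w ∈ bdry G), f w := by
    rw [← Finset.sum_filter_add_sum_filter_not S (fun w => w ∈ bdry G)]
    have h0 : ∑ w ∈ S.filter (fun w => w ∉ bdry G), lap G f w = 0 := by
      apply Finset.sum_eq_zero
      intro w hw
      rw [Finset.mem_filter] at hw
      exact hf.2.1 w hw.2 (fun h => hw.2 (by rw [h]; exact hx))
    rw [h0, add_zero, Finset.mul_sum]
    apply Finset.sum_congr rfl
    intro w hw
    rw [Finset.mem_filter] at hw
    exact hf.2.2 w hw.2 (fun h => hxS (by rw [← h]; exact hw.1))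
  -- Step 3: identify the boundary of the branch subtree with `S ∩ bdry G`.
  have key3 : ∑ z ∈ (bdry (G.induce (branchClosed G u v))).erase
        ⟨v, Set.mem_insert _ _⟩, f z.1
      = ∑ w ∈ S.filter (fun w => w ∈ bdry G), f w := by
    refine Finset.sum_bij' (fun z _ => z.1)
      (fun w hw => ⟨w, Set.mem_insert_of_mem _ ((hmemS w).mp (Finset.mem_filter.mp hw).1)⟩)
      ?_ ?_ ?_ ?_ ?_
    · intro z hz
      rw [Finset.mem_erase] at hz
      obtain ⟨hzv, hzb⟩ := hz
      have hz1 : z.1 ∈ branchSet G u v := by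
        rcases z.2 with h | h
        · exact absurd (Subtype.ext h) hzv
        · exact h
      rw [Finset.mem_filter]
      refine ⟨(hmemS z.1).mpr hz1, ?_⟩
      simp only [bdry, Finset.mem_filter, Finset.mem_univ, true_and] at hzb ⊢
      have hdeg := degree_branch_eq (u := u) (v := v) hG huv hz1
      have hzeq : (⟨z.1, Set.mem_insert_of_mem _ hz1⟩ :
          {y // y ∈ branchClosed G u v}) = z := Subtype.ext rfl
      rw [hzeq] at hdeg
      rw [← hdeg]
      exact hzb
    · intro w hw
      rw [Finset.mem_filter] at hw
      obtain ⟨hwS, hwb⟩ := hw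
      have hw' := (hmemS w).mp hwS
      rw [Finset.mem_erase]
      constructor
      · intro heq
        have h : w = v := congrArg Subtype.val heq
        exact v_not_mem_branchSet hG huv (h ▸ hw')
      · simp only [bdry, Finset.mem_filter, Finset.mem_univ, true_and] at hwb ⊢
        refine (degree_branch_eq (u := u) (v := v) hG huv hw').trans ?_
        exact hwb
    · intro z _; exact Subtype.ext rfl
    · intro w _; rfl
    · intro z _; rfl
  rw [key3, ← key2, key1]
end Steklov
end

section
/- Let G be a finite tree with boundary δG containing x. The set Σ̂(G,x) of values λ≥0 for which there exists a λ-flow f to x on G with f(x)=0 is finite, with cardinality at most |δG|−1. Consequently, if Σ(G,x)≠∅, then the infima defining σ(G,x) and σ̂(G,x) are attained as minima and σ(G,x) ≥ σ̂(G,x) ≥ λ₂((G)²_x) > 0. -/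
open Finset

attribute [local instance] Classical.propDecidable

namespace Steklov

variable {V : Type} [Fintype V] [DecidableEq V]

section General

variable (H : SimpleGraph V)

lemma mem_bdry {v : V} : v ∈ bdry H ↔ H.degree v = 1 := by
  simp [bdry]

lemma lap_eq_lap' (f : V → ℝ) (w : V) :
    lap H f w = ∑ y, if H.Adj w y then f w - f y else 0 := by
  classical
  rw [lap, SimpleGraph.neighborFinset_eq_filter, Finset.sum_filter]

/-- energy identity -/
lemma energy_identity (f : V → ℝ) :
    2 * (∑ w, f w * lap H f w)
      = ∑ w, ∑ y, if H.Adj w y then (f w - f y) ^ 2 else 0 := by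
  classical
  have hsymm : ∀ g : V → V → ℝ,
      (∑ w, ∑ y, if H.Adj w y then g w y else 0)
        = ∑ w, ∑ y, if H.Adj w y then g y w else 0 := by
    intro g
    rw [Finset.sum_comm]
    refine Finset.sum_congr rfl fun w _ => Finset.sum_congr rfl fun y _ => ?_
    rw [H.adj_comm]
  have h1 : (∑ w, f w * lap H f w)
      = ∑ w, ∑ y, if H.Adj w y then f w * (f w - f y) else 0 := by
    refine Finset.sum_congr rfl fun w _ => ?_
    rw [lap_eq_lap', Finset.mul_sum]
    refine Finset.sum_congr rfl fun y _ => ?_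
    split <;> simp
  have h2 : (∑ w, f w * lap H f w)
      = ∑ w, ∑ y, if H.Adj w y then f y * (f y - f w) else 0 := by
    rw [h1, hsymm (fun w y => f w * (f w - f y))]
  calc 2 * (∑ w, f w * lap H f w)
      = (∑ w, ∑ y, if H.Adj w y then f w * (f w - f y) else 0)
        + ∑ w, ∑ y, if H.Adj w y then f y * (f y - f w) else 0 := by
        rw [← h1, ← h2]; ring
    _ = ∑ w, ∑ y, if H.Adj w y then (f w - f y) ^ 2 else 0 := by
        rw [← Finset.sum_add_distrib]
        refine Finset.sum_congr rfl fun w _ => ?_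
        rw [← Finset.sum_add_distrib]
        refine Finset.sum_congr rfl fun y _ => ?_
        split <;> ring

lemma const_of_adj_eq {f : V → ℝ} (hconn : H.Preconnected)
    (hf : ∀ a b, H.Adj a b → f a = f b) (a b : V) : f a = f b := by
  obtain ⟨w⟩ := hconn a b
  induction w with
  | nil => rfl
  | cons hadj _ ih => exact (hf _ _ hadj).trans ih

/-- key triviality lemma via the energy argument -/
lemma eq_zero_of_flowlike {f : V → ℝ} (hconn : H.Preconnected) {lam : ℝ}
    (hlam : lam ≤ 0) (D S : Finset V)
    (h0 : ∀ w ∈ D, f w = 0)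
    (h1 : ∀ w ∉ D, lap H f w = if w ∈ S then lam * f w else 0)
    (hne : ∃ w, w ∈ D ∨ (w ∈ S ∧ w ∉ D ∧ lam ≠ 0)) :
    f = 0 := by
  classical
  have hE : (∑ w, f w * lap H f w) ≤ 0 := by
    apply Finset.sum_nonpos
    intro w _
    by_cases hD : w ∈ D
    · rw [h0 w hD]; simp
    · rw [h1 w hD]
      split
      · have : lam * (f w * f w) ≤ 0 :=
          mul_nonpos_of_nonpos_of_nonneg hlam (mul_self_nonneg _)
        nlinarith
      · simp
  have hQ : (0:ℝ) ≤ ∑ w, ∑ y, if H.Adj w y then (f w - f y) ^ 2 else 0 := by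
    apply Finset.sum_nonneg; intro w _
    apply Finset.sum_nonneg; intro y _
    split
    · positivity
    · exact le_refl 0
  have hE0 : (∑ w, f w * lap H f w) = 0 := by
    have := energy_identity H f
    linarith
  have hQ0 : (∑ w, ∑ y, if H.Adj w y then (f w - f y) ^ 2 else 0) = 0 := by
    have := energy_identity H f
    linarith
  have hadj : ∀ a b, H.Adj a b → f a = f b := by
    intro a b hab
    have h1' := (Finset.sum_eq_zero_iff_of_nonneg (fun w _ => Finset.sum_nonneg
      (fun y _ => by split; exacts [by positivity, le_rfl]))).mp hQ0 a (Finset.mem_univ a)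
    have h2' := (Finset.sum_eq_zero_iff_of_nonneg (fun y _ => by
      split; exacts [by positivity, le_rfl])).mp h1' b (Finset.mem_univ b)
    rw [if_pos hab] at h2'
    have := pow_eq_zero_iff (n := 2) (by norm_num) |>.mp h2'
    linarith [sub_eq_zero.mp this]
  have hconst : ∀ a b : V, f a = f b := const_of_adj_eq H hconn hadj
  have hlap0 : ∀ w, lap H f w = 0 := by
    intro w
    rw [lap_eq_lap']
    apply Finset.sum_eq_zero
    intro y _
    split
    · rw [hconst w y]; ring
    · rfl
  obtain ⟨w, hw⟩ := hne
  have hfw : f w = 0 := by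
    rcases hw with hwD | ⟨hwS, hwD, hlamne⟩
    · exact h0 w hwD
    · have := h1 w hwD
      rw [if_pos hwS, hlap0 w] at this
      rcases mul_eq_zero.mp this.symm with h | h
      · exact absurd h hlamne
      · exact h
  funext a
  rw [Pi.zero_apply, hconst a w, hfw]


open Polynomial in
noncomputable def Lmat : Matrix V V ℝ := fun w y =>
  if w = y then (H.degree w : ℝ) else if H.Adj w y then -1 else 0

lemma mulVec_Lmat (f : V → ℝ) (w : V) : (Lmat H).mulVec f w = lap H f w := by
  classical
  have hterm : ∀ y, Lmat H w y * f y
      = (if w = y then (H.degree w : ℝ) * f y else 0)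
        + (if H.Adj w y then -(f y) else 0) := by
    intro y
    by_cases h1 : w = y
    · subst h1
      simp [Lmat, H.irrefl]
    · by_cases h2 : H.Adj w y <;> simp [Lmat, h1, h2]
  have hdeg : (H.degree w : ℝ) = (H.neighborFinset w).card := by
    rw [SimpleGraph.degree]
  rw [Matrix.mulVec, dotProduct]
  simp only [hterm]
  rw [Finset.sum_add_distrib, Finset.sum_ite_eq (Finset.univ) w (fun y => (H.degree w : ℝ) * f y)]
  rw [if_pos (Finset.mem_univ w)]
  have h2 : (∑ y, if H.Adj w y then -(f y) else 0) = ∑ y ∈ H.neighborFinset w, -(f y) := by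
    rw [SimpleGraph.neighborFinset_eq_filter, Finset.sum_filter]
  rw [h2, lap, Finset.sum_sub_distrib, Finset.sum_const, Finset.sum_neg_distrib, hdeg,
    nsmul_eq_mul]
  ring

open Polynomial in
/-- the matrix pencil as a matrix of polynomials -/
noncomputable def Mp (D S : Finset V) : Matrix V V ℝ[X] := fun w y =>
  if w ∈ D then (if y = w then 1 else 0)
  else C (Lmat H w y) - (if w ∈ S ∧ y = w then X else 0)

open Polynomial in
lemma natDegree_Mp_le (D S : Finset V) (w y : V) :
    (Mp H D S w y).natDegree ≤ if w ∈ S then 1 else 0 := by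
  unfold Mp
  by_cases hD : w ∈ D
  · rw [if_pos hD]
    split
    · split <;> simp
    · split <;> simp
  · rw [if_neg hD]
    by_cases hS : w ∈ S
    · rw [if_pos hS]
      refine (natDegree_sub_le _ _).trans ?_
      simp only [natDegree_C]
      split <;> simp [natDegree_X]
    · rw [if_neg hS]
      rw [if_neg (by simp [hS])]
      simp

open Polynomial in
lemma natDegree_det_Mp_le (D S : Finset V) : (Mp H D S).det.natDegree ≤ S.card := by
  classical
  rw [Matrix.det_apply']
  apply natDegree_sum_le_of_forall_le
  intro σ _
  refine (natDegree_mul_le).trans ?_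
  have hsign : ((Equiv.Perm.sign σ : ℤ) : ℝ[X]).natDegree = 0 := natDegree_intCast _
  rw [hsign, zero_add]
  refine (natDegree_prod_le _ _).trans ?_
  calc (∑ i, (Mp H D S (σ i) i).natDegree)
      ≤ ∑ i, if σ i ∈ S then 1 else 0 :=
        Finset.sum_le_sum fun i _ => natDegree_Mp_le H D S (σ i) i
    _ = ∑ w, if w ∈ S then 1 else 0 := Fintype.sum_equiv σ _ _ (fun i => rfl)
    _ = S.card := by rw [Finset.sum_ite_mem, Finset.univ_inter, Finset.sum_const, smul_eq_mul, mul_one]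

open Polynomial in
lemma mulVec_Mp_eval (D S : Finset V) (lam : ℝ) (f : V → ℝ) (w : V) :
    ((Mp H D S).map (eval lam)).mulVec f w
      = if w ∈ D then f w else lap H f w - (if w ∈ S then lam * f w else 0) := by
  classical
  by_cases hD : w ∈ D
  · rw [if_pos hD]
    rw [Matrix.mulVec, dotProduct]
    have : ∀ y, ((Mp H D S).map (eval lam)) w y * f y = if y = w then f y else 0 := by
      intro y
      simp only [Matrix.map_apply, Mp, if_pos hD]
      split <;> simp
    simp only [this]
    rw [Finset.sum_ite_eq' Finset.univ w f, if_pos (Finset.mem_univ w)]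
  · rw [if_neg hD]
    rw [Matrix.mulVec, dotProduct]
    have : ∀ y, ((Mp H D S).map (eval lam)) w y * f y
        = Lmat H w y * f y - (if w ∈ S ∧ y = w then lam * f y else 0) := by
      intro y
      simp only [Matrix.map_apply, Mp, if_neg hD]
      split <;> simp <;> ring
    simp only [this]
    rw [Finset.sum_sub_distrib]
    have h2 : (∑ y, if w ∈ S ∧ y = w then lam * f y else 0)
        = if w ∈ S then lam * f w else 0 := by
      by_cases hS : w ∈ S <;> simp [hS, Finset.sum_ite_eq']
    have h3 : (Lmat H).mulVec f w = ∑ y, Lmat H w y * f y := rfl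
    rw [h2, ← h3, mulVec_Lmat]

open Polynomial in
lemma det_Mp_ne_zero (hconn : H.Preconnected) (D S : Finset V)
    (hne : ∃ w, w ∈ D ∨ (w ∈ S ∧ w ∉ D)) : (Mp H D S).det ≠ 0 := by
  classical
  intro hdet
  have heval : ((Mp H D S).map (eval (-1 : ℝ))).det = 0 := by
    have h := (evalRingHom (-1 : ℝ)).map_det (Mp H D S)
    rw [RingHom.mapMatrix_apply] at h
    simp only [coe_evalRingHom] at h
    rw [← h, hdet]
    simp
  obtain ⟨f, hf0, hfm⟩ := Matrix.exists_mulVec_eq_zero_iff.mpr heval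
  apply hf0
  refine eq_zero_of_flowlike H hconn (lam := -1) (by norm_num) D S ?_ ?_ ?_
  · intro w hw
    have := congrFun hfm w
    rw [mulVec_Mp_eval, if_pos hw] at this
    exact this
  · intro w hw
    have := congrFun hfm w
    rw [mulVec_Mp_eval, if_neg hw] at this
    rw [Pi.zero_apply, sub_eq_zero] at this
    exact this
  · obtain ⟨w, hw⟩ := hne
    exact ⟨w, hw.imp id (fun h => ⟨h.1, h.2, by norm_num⟩)⟩

open Polynomial in
/-- the main finiteness lemma -/
lemma spec_finite (hconn : H.Preconnected) (D S : Finset V)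
    (hne : ∃ w, w ∈ D ∨ (w ∈ S ∧ w ∉ D)) :
    ({lam : ℝ | ∃ f : V → ℝ, f ≠ 0 ∧ (∀ w ∈ D, f w = 0) ∧
      ∀ w ∉ D, lap H f w = if w ∈ S then lam * f w else 0}).Finite ∧
    ({lam : ℝ | ∃ f : V → ℝ, f ≠ 0 ∧ (∀ w ∈ D, f w = 0) ∧
      ∀ w ∉ D, lap H f w = if w ∈ S then lam * f w else 0}).ncard ≤ S.card := by
  classical
  set p := (Mp H D S).det with hp
  have hpne : p ≠ 0 := det_Mp_ne_zero H hconn D S hne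
  have hsub : {lam : ℝ | ∃ f : V → ℝ, f ≠ 0 ∧ (∀ w ∈ D, f w = 0) ∧
      ∀ w ∉ D, lap H f w = if w ∈ S then lam * f w else 0} ⊆ ↑p.roots.toFinset := by
    intro lam ⟨f, hf0, h0, h1⟩
    have hker : ((Mp H D S).map (eval lam)).mulVec f = 0 := by
      funext w
      rw [mulVec_Mp_eval]
      by_cases hD : w ∈ D
      · rw [if_pos hD, h0 w hD]; rfl
      · rw [if_neg hD, h1 w hD, Pi.zero_apply]
        split <;> ring
    have hdet0 : ((Mp H D S).map (eval lam)).det = 0 :=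
      Matrix.exists_mulVec_eq_zero_iff.mp ⟨f, hf0, hker⟩
    have hev : p.eval lam = 0 := by
      have h := (evalRingHom lam).map_det (Mp H D S)
      rw [RingHom.mapMatrix_apply] at h
      simp only [coe_evalRingHom] at h
      rw [← hp] at h
      rw [h]
      exact hdet0
    simp only [Finset.mem_coe, Multiset.mem_toFinset, mem_roots hpne]
    exact hev
  have hfin : (↑p.roots.toFinset : Set ℝ).Finite := (p.roots.toFinset).finite_toSet
  refine ⟨hfin.subset hsub, ?_⟩
  calc ({lam : ℝ | ∃ f : V → ℝ, f ≠ 0 ∧ (∀ w ∈ D, f w = 0) ∧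
      ∀ w ∉ D, lap H f w = if w ∈ S then lam * f w else 0}).ncard
      ≤ (↑p.roots.toFinset : Set ℝ).ncard := Set.ncard_le_ncard hsub hfin
    _ = p.roots.toFinset.card := Set.ncard_coe_finset _
    _ ≤ Multiset.card p.roots := Multiset.toFinset_card_le _
    _ ≤ p.natDegree := p.card_roots'
    _ ≤ S.card := natDegree_det_Mp_le H D S

end General


section Double

variable (G : SimpleGraph V) (x : V)

lemma double_adj_inl_inl (u w : V) : (doubleAt G x).Adj (Sum.inl u) (Sum.inl w) ↔ G.Adj u w :=
  Iff.rfl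

lemma double_adj_inl_inr (u : V) (w : {v : V // v ≠ x}) :
    (doubleAt G x).Adj (Sum.inl u) (Sum.inr w) ↔ (u = x ∧ G.Adj x w.1) := Iff.rfl

lemma double_adj_inr_inl (u : {v : V // v ≠ x}) (w : V) :
    (doubleAt G x).Adj (Sum.inr u) (Sum.inl w) ↔ (w = x ∧ G.Adj x u.1) := Iff.rfl

lemma double_adj_inr_inr (u w : {v : V // v ≠ x}) :
    (doubleAt G x).Adj (Sum.inr u) (Sum.inr w) ↔ G.Adj u.1 w.1 := Iff.rfl

lemma sum_subtype_ne (g : V → ℝ) :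
    (∑ w : {v : V // v ≠ x}, g w.1) = ∑ w ∈ Finset.univ.erase x, g w :=
  (Finset.sum_subtype _ (fun w => by simp) g).symm

lemma sum_subtype_ne_nat (g : V → ℕ) :
    (∑ w : {v : V // v ≠ x}, g w.1) = ∑ w ∈ Finset.univ.erase x, g w :=
  (Finset.sum_subtype _ (fun w => by simp) g).symm

lemma degree_eq_sum (H : SimpleGraph V) (v : V) :
    H.degree v = ∑ w, if H.Adj v w then 1 else 0 := by
  classical
  rw [← SimpleGraph.card_neighborFinset_eq_degree, SimpleGraph.neighborFinset_eq_filter,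
    Finset.card_filter]

lemma degree_double_inl {y : V} (hy : y ≠ x) :
    (doubleAt G x).degree (Sum.inl y) = G.degree y := by
  classical
  rw [degree_eq_sum, degree_eq_sum, Fintype.sum_sum_type]
  have h2 : (∑ w : {v : V // v ≠ x},
      if (doubleAt G x).Adj (Sum.inl y) (Sum.inr w) then 1 else 0) = 0 := by
    apply Finset.sum_eq_zero
    intro w _
    rw [if_neg]
    rw [double_adj_inl_inr]
    exact fun h => hy h.1
  rw [h2, add_zero]
  rfl

lemma degree_double_inr (u : {v : V // v ≠ x}) :
    (doubleAt G x).degree (Sum.inr u) = G.degree u.1 := by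
  classical
  rw [degree_eq_sum, degree_eq_sum, Fintype.sum_sum_type]
  have h1 : (∑ w : V, if (doubleAt G x).Adj (Sum.inr u) (Sum.inl w) then 1 else 0)
      = if G.Adj u.1 x then 1 else 0 := by
    simp only [double_adj_inr_inl, ite_and]
    rw [Finset.sum_ite_eq' Finset.univ x, if_pos (Finset.mem_univ x), G.adj_comm]
  have h2 : (∑ w : {v : V // v ≠ x},
      if (doubleAt G x).Adj (Sum.inr u) (Sum.inr w) then 1 else 0)
      = ∑ w ∈ Finset.univ.erase x, if G.Adj u.1 w then 1 else 0 := by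
    simp only [double_adj_inr_inr]
    exact sum_subtype_ne_nat x (fun w => if G.Adj u.1 w then 1 else 0)
  rw [h1, h2]
  exact Finset.add_sum_erase Finset.univ (fun w => if G.Adj u.1 w then 1 else 0)
    (Finset.mem_univ x)

variable {f : V → ℝ}

lemma lap_double_inl_x (hfx : f x = 0) :
    lap (doubleAt G x) (Sum.elim f (fun u => -f u.1)) (Sum.inl x) = 0 := by
  classical
  rw [lap_eq_lap', Fintype.sum_sum_type]
  have h1 : (∑ w : V, if (doubleAt G x).Adj (Sum.inl x) (Sum.inl w) then
      Sum.elim f (fun u : {v : V // v ≠ x} => -f u.1) (Sum.inl x)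
        - Sum.elim f (fun u : {v : V // v ≠ x} => -f u.1) (Sum.inl w) else 0)
      = ∑ w : V, if G.Adj x w then -f w else 0 := by
    refine Finset.sum_congr rfl fun w _ => ?_
    simp only [Sum.elim_inl, double_adj_inl_inl, hfx]
    split <;> ring_nf
  have h2 : (∑ w : {v : V // v ≠ x}, if (doubleAt G x).Adj (Sum.inl x) (Sum.inr w) then
      Sum.elim f (fun u : {v : V // v ≠ x} => -f u.1) (Sum.inl x)
        - Sum.elim f (fun u : {v : V // v ≠ x} => -f u.1) (Sum.inr w) else 0)
      = ∑ w ∈ Finset.univ.erase x, if G.Adj x w then f w else 0 := by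
    have key : ∀ w : {v : V // v ≠ x}, (if (doubleAt G x).Adj (Sum.inl x) (Sum.inr w) then
        Sum.elim f (fun u : {v : V // v ≠ x} => -f u.1) (Sum.inl x)
          - Sum.elim f (fun u : {v : V // v ≠ x} => -f u.1) (Sum.inr w) else 0)
        = if G.Adj x w.1 then f w.1 else 0 := by
      intro w
      simp only [Sum.elim_inl, Sum.elim_inr, double_adj_inl_inr, hfx, true_and]
      split <;> ring_nf
    rw [Finset.sum_congr rfl fun w _ => key w]
    exact sum_subtype_ne x (fun w => if G.Adj x w then f w else 0)
  rw [h1, h2, Finset.sum_erase _ (by rw [if_neg (G.irrefl)])]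
  rw [← Finset.sum_add_distrib]
  apply Finset.sum_eq_zero
  intro w _
  split <;> ring

lemma lap_double_inl_ne {y : V} (hy : y ≠ x) :
    lap (doubleAt G x) (Sum.elim f (fun u => -f u.1)) (Sum.inl y) = lap G f y := by
  classical
  rw [lap_eq_lap', Fintype.sum_sum_type]
  have h2 : (∑ w : {v : V // v ≠ x}, if (doubleAt G x).Adj (Sum.inl y) (Sum.inr w) then
      Sum.elim f (fun u : {v : V // v ≠ x} => -f u.1) (Sum.inl y)
        - Sum.elim f (fun u : {v : V // v ≠ x} => -f u.1) (Sum.inr w) else 0) = 0 := by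
    apply Finset.sum_eq_zero
    intro w _
    rw [if_neg]
    rw [double_adj_inl_inr]
    exact fun h => hy h.1
  rw [h2, add_zero, lap_eq_lap']
  rfl

lemma lap_double_inr (hfx : f x = 0) (u : {v : V // v ≠ x}) :
    lap (doubleAt G x) (Sum.elim f (fun u => -f u.1)) (Sum.inr u) = -lap G f u.1 := by
  classical
  rw [lap_eq_lap', Fintype.sum_sum_type]
  have h1 : (∑ w : V, if (doubleAt G x).Adj (Sum.inr u) (Sum.inl w) then
      Sum.elim f (fun u : {v : V // v ≠ x} => -f u.1) (Sum.inr u)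
        - Sum.elim f (fun u : {v : V // v ≠ x} => -f u.1) (Sum.inl w) else 0)
      = if G.Adj u.1 x then -f u.1 - f x else 0 := by
    simp only [Sum.elim_inl, Sum.elim_inr, double_adj_inr_inl, ite_and]
    rw [Finset.sum_ite_eq' Finset.univ x, if_pos (Finset.mem_univ x), G.adj_comm]
  have h2 : (∑ w : {v : V // v ≠ x}, if (doubleAt G x).Adj (Sum.inr u) (Sum.inr w) then
      Sum.elim f (fun u : {v : V // v ≠ x} => -f u.1) (Sum.inr u)
        - Sum.elim f (fun u : {v : V // v ≠ x} => -f u.1) (Sum.inr w) else 0)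
      = ∑ w ∈ Finset.univ.erase x, if G.Adj u.1 w then -f u.1 + f w else 0 := by
    have : ∀ w : {v : V // v ≠ x}, (if (doubleAt G x).Adj (Sum.inr u) (Sum.inr w) then
        Sum.elim f (fun u : {v : V // v ≠ x} => -f u.1) (Sum.inr u)
          - Sum.elim f (fun u : {v : V // v ≠ x} => -f u.1) (Sum.inr w) else 0)
        = if G.Adj u.1 w.1 then -f u.1 + f w.1 else 0 := by
      intro w
      simp only [Sum.elim_inr, double_adj_inr_inr]
      split <;> ring_nf
    rw [Finset.sum_congr rfl fun w _ => this w]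
    exact sum_subtype_ne x (fun w => if G.Adj u.1 w then -f u.1 + f w else 0)
  rw [h1, h2, lap_eq_lap']
  have h3 : (if G.Adj u.1 x then -f u.1 - f x else 0)
      = if G.Adj u.1 x then -f u.1 + f x else 0 := by
    rw [hfx]; split <;> ring
  rw [h3, Finset.add_sum_erase Finset.univ (fun w => if G.Adj u.1 w then -f u.1 + f w else 0)
    (Finset.mem_univ x)]
  rw [← Finset.sum_neg_distrib]
  refine Finset.sum_congr rfl fun w _ => ?_
  split <;> ring

def inlHom : G →g doubleAt G x := ⟨Sum.inl, fun h => h⟩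

def mirrorHom : G →g doubleAt G x := by
  refine ⟨fun v => if h : v = x then Sum.inl x else Sum.inr ⟨v, h⟩, ?_⟩
  intro a b hab
  by_cases ha : a = x <;> by_cases hb : b = x
  · subst ha; subst hb; exact absurd hab (G.irrefl)
  · subst ha
    simp only [dif_pos rfl, dif_neg hb]
    exact ⟨rfl, hab⟩
  · subst hb
    simp only [dif_pos rfl, dif_neg ha]
    exact ⟨rfl, hab.symm⟩
  · simp only [dif_neg ha, dif_neg hb]
    exact hab

lemma double_preconnected (hconn : G.Preconnected) : (doubleAt G x).Preconnected := by
  have key : ∀ c, (doubleAt G x).Reachable c (Sum.inl x) := by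
    rintro (u | u)
    · exact (hconn u x).map (inlHom G x)
    · have h := (hconn u.1 x).map (mirrorHom G x)
      have e1 : mirrorHom G x u.1 = Sum.inr u := by
        simp only [mirrorHom]
        exact dif_neg u.2
      have e2 : mirrorHom G x x = Sum.inl x := by
        simp only [mirrorHom]
        exact dif_pos rfl
      rwa [e1, e2] at h
  intro a b
  exact (key a).trans (key b).symm

end Double


section Tree

variable (G : SimpleGraph V)

lemma exists_second_leaf (hG : G.IsTree) (hcard : 2 ≤ Fintype.card V)
    (x : V) (hx : x ∈ bdry G) : ∃ y, y ∈ bdry G ∧ y ≠ x := by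
  classical
  have hdeg1 : ∀ v : V, 1 ≤ G.degree v := by
    intro v
    obtain ⟨y, hy⟩ := Fintype.exists_ne_of_one_lt_card (by omega) v
    obtain ⟨p⟩ := hG.isConnected.preconnected v y
    cases p with
    | nil => exact absurd rfl hy.symm
    | cons h q => exact (SimpleGraph.degree_pos_iff_exists_adj G v).mpr ⟨_, h⟩
  by_contra hcon
  push_neg at hcon
  have hge2 : ∀ v ∈ Finset.univ.erase x, 2 ≤ G.degree v := by
    intro v hv
    have hvx : v ≠ x := (Finset.mem_erase.mp hv).1
    have h1 : G.degree v ≠ 1 := by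
      intro h1
      exact hvx (hcon v ((mem_bdry G).mpr h1))
    have := hdeg1 v
    omega
  have hsum : (∑ v, G.degree v) = 2 * G.edgeFinset.card :=
    SimpleGraph.sum_degrees_eq_twice_card_edges G
  have hE : G.edgeFinset.card + 1 = Fintype.card V := hG.card_edgeFinset
  have hsplit : (∑ v, G.degree v) = G.degree x + ∑ v ∈ Finset.univ.erase x, G.degree v :=
    (Finset.add_sum_erase Finset.univ (fun v => G.degree v) (Finset.mem_univ x)).symm
  have hlow : 2 * (Fintype.card V - 1) ≤ ∑ v ∈ Finset.univ.erase x, G.degree v := by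
    calc 2 * (Fintype.card V - 1) = ∑ _v ∈ Finset.univ.erase x, 2 := by
          rw [Finset.sum_const, Finset.card_erase_of_mem (Finset.mem_univ x),
            Finset.card_univ, smul_eq_mul, mul_comm]
      _ ≤ ∑ v ∈ Finset.univ.erase x, G.degree v := Finset.sum_le_sum hge2
  have hdx : G.degree x = 1 := (mem_bdry G).mp hx
  omega

end Tree

/-- For `x ∈ δG`, the set `Σ̂(G,x)` is finite with at most `|δG| - 1`
elements; consequently, if `Σ(G,x) ≠ ∅` then the infima defining `σ(G,x)` and `σ̂(G,x)`
are attained as minima, and `σ(G,x) ≥ σ̂(G,x) ≥ λ₂((G)²_x) > 0`. -/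
theorem sigmaHat_finite (G : SimpleGraph V) (hG : G.IsTree) (hcard : 2 ≤ Fintype.card V)
    (x : V) (hx : x ∈ bdry G) :
    (SigmaHatSet G x).Finite ∧ (SigmaHatSet G x).ncard ≤ (bdry G).card - 1 ∧
    ((SigmaSet G x).Nonempty →
      IsLeast (SigmaSet G x) (sigma G x) ∧
      IsLeast (SigmaHatSet G x) (sigmaHat G x) ∧
      sigmaHat G x ≤ sigma G x ∧
      lambda2 (doubleAt G x) ≤ sigmaHat G x ∧
      0 < lambda2 (doubleAt G x)) := by
  classical
  have hconn := hG.isConnected.preconnected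
  have hspec := spec_finite G hconn {x} ((bdry G).erase x)
    ⟨x, Or.inl (Finset.mem_singleton_self x)⟩
  have hsubS : SigmaHatSet G x ⊆ {lam : ℝ | ∃ f : V → ℝ, f ≠ 0 ∧
      (∀ w ∈ ({x} : Finset V), f w = 0) ∧
      ∀ w ∉ ({x} : Finset V), lap G f w = if w ∈ (bdry G).erase x then lam * f w else 0} := by
    rintro lam ⟨hlam0, f, hflow, hfx⟩
    refine ⟨f, hflow.1, ?_, ?_⟩
    · intro w hw
      rw [Finset.mem_singleton] at hw
      subst hw; exact hfx
    · intro w hw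
      rw [Finset.mem_singleton] at hw
      by_cases hb : w ∈ bdry G
      · rw [if_pos (Finset.mem_erase.mpr ⟨hw, hb⟩)]
        exact hflow.2.2 w hb hw
      · rw [if_neg (fun hc => hb (Finset.mem_erase.mp hc).2)]
        exact hflow.2.1 w hb hw
  have hfin : (SigmaHatSet G x).Finite := hspec.1.subset hsubS
  have hncard : (SigmaHatSet G x).ncard ≤ (bdry G).card - 1 := by
    refine le_trans (le_trans (Set.ncard_le_ncard hsubS hspec.1) hspec.2) ?_
    rw [Finset.card_erase_of_mem hx]
  have hpos : ∀ lam ∈ SigmaHatSet G x, 0 < lam := by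
    rintro lam ⟨hlam0, f, hflow, hfx⟩
    rcases lt_or_eq_of_le hlam0 with h | h
    · exact h
    · exfalso
      apply hflow.1
      refine eq_zero_of_flowlike G hconn (lam := 0) le_rfl {x} ∅ ?_ ?_
        ⟨x, Or.inl (Finset.mem_singleton_self x)⟩
      · intro w hw; rw [Finset.mem_singleton] at hw; subst hw; exact hfx
      · intro w hw
        rw [Finset.mem_singleton] at hw
        rw [if_neg (Finset.notMem_empty w)]
        by_cases hb : w ∈ bdry G
        · rw [hflow.2.2 w hb hw, ← h]; ring
        · exact hflow.2.1 w hb hw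
  refine ⟨hfin, hncard, ?_⟩
  intro hne
  have hSsub : SigmaSet G x ⊆ SigmaHatSet G x := by
    rintro lam ⟨h0, f, hf, hfx, _⟩; exact ⟨h0, f, hf, hfx⟩
  have hSfin := hfin.subset hSsub
  have hhatne : (SigmaHatSet G x).Nonempty := hne.mono hSsub
  have least1 : IsLeast (SigmaSet G x) (Steklov.sigma G x) :=
    ⟨hne.csInf_mem hSfin, fun b hb => csInf_le hSfin.bddBelow hb⟩
  have least2 : IsLeast (SigmaHatSet G x) (sigmaHat G x) :=
    ⟨hhatne.csInf_mem hfin, fun b hb => csInf_le hfin.bddBelow hb⟩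
  have hle : sigmaHat G x ≤ Steklov.sigma G x := csInf_le_csInf hfin.bddBelow hne hSsub
  have hσmem := least2.1
  have hσpos : 0 < sigmaHat G x := hpos _ hσmem
  obtain ⟨hσ0, f, hflow, hfx⟩ := hσmem
  have hbdry_inl : ∀ {y : V}, y ≠ x → (Sum.inl y ∈ bdry (doubleAt G x) ↔ y ∈ bdry G) := by
    intro y hy
    rw [mem_bdry, mem_bdry, degree_double_inl G x hy]
  have hbdry_inr : ∀ u : {v : V // v ≠ x}, (Sum.inr u ∈ bdry (doubleAt G x) ↔ u.1 ∈ bdry G) := by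
    intro u
    rw [mem_bdry, mem_bdry, degree_double_inr G x u]
  have hpair : IsEigenpair (doubleAt G x) (sigmaHat G x)
      (Sum.elim f (fun u : {v : V // v ≠ x} => -f u.1)) := by
    refine ⟨?_, ?_, ?_⟩
    · intro hF0
      apply hflow.1
      funext v
      exact congrFun hF0 (Sum.inl v)
    · rintro (y | u) hw
      · by_cases hyx : y = x
        · rw [hyx]; exact lap_double_inl_x G x hfx
        · rw [lap_double_inl_ne G x hyx]
          exact hflow.2.1 y (fun hb => hw ((hbdry_inl hyx).mpr hb)) hyx
      · rw [lap_double_inr G x hfx u,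
          hflow.2.1 u.1 (fun hb => hw ((hbdry_inr u).mpr hb)) u.2]
        ring
    · rintro (y | u) hw
      · by_cases hyx : y = x
        · rw [hyx, lap_double_inl_x G x hfx, Sum.elim_inl, hfx]
          ring
        · rw [lap_double_inl_ne G x hyx,
            hflow.2.2 y ((hbdry_inl hyx).mp hw) hyx, Sum.elim_inl]
      · rw [lap_double_inr G x hfx u,
          hflow.2.2 u.1 ((hbdry_inr u).mp hw) u.2, Sum.elim_inr]
        ring
  obtain ⟨y, hyb, hyx⟩ := exists_second_leaf G hG hcard x hx
  have hspec2 := spec_finite (doubleAt G x) (double_preconnected G x hconn) ∅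
    (bdry (doubleAt G x))
    ⟨Sum.inl y, Or.inr ⟨(hbdry_inl hyx).mpr hyb, Finset.notMem_empty _⟩⟩
  have hsubT : {lam : ℝ | 0 < lam ∧ ∃ g : V ⊕ {v : V // v ≠ x} → ℝ,
        IsEigenpair (doubleAt G x) lam g}
      ⊆ {lam : ℝ | ∃ g : V ⊕ {v : V // v ≠ x} → ℝ, g ≠ 0 ∧
        (∀ w ∈ (∅ : Finset (V ⊕ {v : V // v ≠ x})), g w = 0) ∧
        ∀ w ∉ (∅ : Finset (V ⊕ {v : V // v ≠ x})),
          lap (doubleAt G x) g w = if w ∈ bdry (doubleAt G x) then lam * g w else 0} := by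
    rintro lam ⟨hl, g, hg⟩
    refine ⟨g, hg.1, fun w hw => absurd hw (Finset.notMem_empty w), fun w _ => ?_⟩
    by_cases hb : w ∈ bdry (doubleAt G x)
    · rw [if_pos hb]; exact hg.2.2 w hb
    · rw [if_neg hb]; exact hg.2.1 w hb
  have hTfin := hspec2.1.subset hsubT
  have hσT : sigmaHat G x ∈ {lam : ℝ | 0 < lam ∧ ∃ g : V ⊕ {v : V // v ≠ x} → ℝ,
      IsEigenpair (doubleAt G x) lam g} :=
    ⟨hσpos, _, hpair⟩
  refine ⟨least1, least2, hle, ?_, ?_⟩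
  · exact csInf_le hTfin.bddBelow hσT
  · exact (Set.Nonempty.csInf_mem ⟨_, hσT⟩ hTfin).1
end Steklov
end
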